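/- arXiv:2510.07470 — 6 statements merged into one kernel-verified Lean document; each statement's English description precedes it below -/
import Mathlib

section
/- (Small gradient at the output when no restart is triggered.) Let f, g : ℝ^d → ℝ be twice differentiable with ∇f L_f-Lipschitz, Hessian of f ρ_f-Lipschitz, ∇g L_g-Lipschitz, Hessian of g ρ_g-Lipschitz; set L = L_f + L_g, ρ = ρ_f + ρ_g, F = f + g. Let ε > 0, η = 1/(8L), B = (1/2)·√(ε/ρ), θ = 4·(ε·ρ·η²)^{1/4} with θ ∈ (0,1), and let K ≥ 1 be an integer with K·θ = 1. Let x^{−1} = x⁰, x¹, …, x^K and z⁰, …, z^{K−1} be an inertial proximal epoch such that the restart criterion is never triggered: for every k ∈ {1,…,K}, k·Σ_{t=0}^{k−1}‖x^{t+1} − x^t‖² ≤ B². Let K₀ ∈ {⌊K/2⌋, …, K−1} be such that ‖x^{K₀+1} − x^{K₀}‖ ≤ ‖x^{k+1} − x^k‖ for every k ∈ {⌊K/2⌋, …, K−1}, and let ẑ = (1/(K₀+1))·Σ_{k=0}^{K₀} z^k. Then ‖∇F(ẑ)‖ ≤ 45·ε. -/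
open Finset

lemma sq_le_helper {a b : ℝ} (ha : 0 ≤ a) (hb : 0 ≤ b) (h : a ^ 2 ≤ b ^ 2) : a ≤ b := by
  nlinarith [sq_nonneg (a - b), sq_nonneg (a + b)]

lemma tel_aux {E : Type*} [AddCommGroup E] (x : ℕ → E) (m : ℕ) :
    ∑ k ∈ Finset.range (m + 1), (x k - x (k - 1)) = x m - x 0 := by
  induction m with
  | zero => simp
  | succ m ih =>
      rw [Finset.sum_range_succ, ih]
      have : m + 1 - 1 = m := by omega
      rw [this]
      abel

lemma taylor_aux {E : Type*} [NormedAddCommGroup E] [NormedSpace ℝ E]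
    (h : E → E) (hdiff : Differentiable ℝ h) (ρ : ℝ)
    (hlip : ∀ a b : E, ‖fderiv ℝ h a - fderiv ℝ h b‖ ≤ ρ * ‖a - b‖)
    (p q : E) : ‖h q - h p - fderiv ℝ h p (q - p)‖ ≤ ρ / 2 * ‖q - p‖ ^ 2 := by
  set v := q - p with hv
  set H := fderiv ℝ h p with hH
  set ψ : ℝ → E := fun t => h (p + t • v) - h p - t • H v with hψ
  have hline : ∀ t : ℝ, HasDerivAt (fun s : ℝ => p + s • v) v t := fun t => by
    simpa using ((hasDerivAt_id t).smul_const v).const_add p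
  have hψ' : ∀ t : ℝ, HasDerivAt ψ (fderiv ℝ h (p + t • v) v - H v) t := by
    intro t
    have h1 : HasDerivAt (fun s : ℝ => h (p + s • v)) (fderiv ℝ h (p + t • v) v) t :=
      (hdiff (p + t • v)).hasFDerivAt.comp_hasDerivAt t (hline t)
    have h2 : HasDerivAt (fun s : ℝ => s • H v) (H v) t := by
      simpa using (hasDerivAt_id t).smul_const (H v)
    simpa [hψ] using (h1.sub_const (h p)).fun_sub h2
  have hB : ∀ t : ℝ, HasDerivAt (fun t : ℝ => ρ / 2 * ‖v‖ ^ 2 * t ^ 2)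
      (ρ / 2 * ‖v‖ ^ 2 * (2 * t)) t := by
    intro t
    have := (hasDerivAt_pow 2 t).const_mul (ρ / 2 * ‖v‖ ^ 2)
    simpa [mul_comm, mul_assoc] using this
  have bound : ∀ t ∈ Set.Ico (0 : ℝ) 1,
      ‖fderiv ℝ h (p + t • v) v - H v‖ ≤ ρ / 2 * ‖v‖ ^ 2 * (2 * t) := by
    intro t ht
    have h4 : fderiv ℝ h (p + t • v) v - H v = (fderiv ℝ h (p + t • v) - H) v := by
      simp [ContinuousLinearMap.sub_apply]
    rw [h4]
    have h1 : ‖(fderiv ℝ h (p + t • v) - H) v‖ ≤ ‖fderiv ℝ h (p + t • v) - H‖ * ‖v‖ :=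
      (fderiv ℝ h (p + t • v) - H).le_opNorm v
    have h2 : ‖fderiv ℝ h (p + t • v) - H‖ ≤ ρ * ‖p + t • v - p‖ := hlip _ _
    have h3 : ‖p + t • v - p‖ = t * ‖v‖ := by
      simp [norm_smul, abs_of_nonneg ht.1]
    rw [h3] at h2
    calc ‖(fderiv ℝ h (p + t • v) - H) v‖ ≤ (ρ * (t * ‖v‖)) * ‖v‖ :=
          h1.trans (mul_le_mul_of_nonneg_right h2 (norm_nonneg v))
      _ = ρ / 2 * ‖v‖ ^ 2 * (2 * t) := by ring
  have hcont : ContinuousOn ψ (Set.Icc (0 : ℝ) 1) :=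
    (Continuous.continuousOn (continuous_iff_continuousAt.2 fun t => (hψ' t).continuousAt))
  have key := image_norm_le_of_norm_deriv_right_le_deriv_boundary (E := E)
    hcont (fun t _ => (hψ' t).hasDerivWithinAt)
    (by simp [hψ]) hB bound (Set.right_mem_Icc.2 zero_le_one)
  have hpv : p + v = q := by rw [hv]; abel
  have h1 : ψ 1 = h q - h p - H v := by
    simp only [hψ, one_smul, hpv]
  rw [h1] at key
  simpa using key

lemma variance_aux {E : Type*} [NormedAddCommGroup E] [InnerProductSpace ℝ E]
    (n : ℕ) (hn : 0 < n) (w : ℕ → E) (c m : E)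
    (hm : m = (n : ℝ)⁻¹ • ∑ k ∈ Finset.range n, w k) :
    ∑ k ∈ Finset.range n, ‖w k - m‖ ^ 2 ≤ ∑ k ∈ Finset.range n, ‖w k - c‖ ^ 2 := by
  have hn0 : ((n : ℝ)) ≠ 0 := Nat.cast_ne_zero.2 hn.ne'
  have hsum : ∑ k ∈ Finset.range n, (w k - m) = 0 := by
    rw [Finset.sum_sub_distrib, Finset.sum_const, Finset.card_range,
      ← Nat.cast_smul_eq_nsmul ℝ, hm, smul_inv_smul₀ hn0, sub_self]
  have expand : ∀ k ∈ Finset.range n, ‖w k - c‖ ^ 2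
      = ‖w k - m‖ ^ 2 + 2 * (inner ℝ (w k - m) (m - c) : ℝ) + ‖m - c‖ ^ 2 := by
    intro k _
    have h0 : w k - c = (w k - m) + (m - c) := by abel
    rw [h0, norm_add_sq_real]
  rw [Finset.sum_congr rfl expand, Finset.sum_add_distrib, Finset.sum_add_distrib,
    ← Finset.mul_sum, ← sum_inner, hsum, inner_zero_left, mul_zero, add_zero]
  have : (0 : ℝ) ≤ ∑ _k ∈ Finset.range n, ‖m - c‖ ^ 2 := by positivity
  linarith

lemma minstep_arith {s c SK Kr B θ : ℝ} (hs0 : 0 ≤ s)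
    (h1 : c * s ^ 2 ≤ SK) (h3 : Kr * SK ≤ B ^ 2) (hc2 : Kr ≤ 2 * c)
    (hK0 : 0 < Kr) (hKθ : Kr * θ = 1) (hB0 : 0 ≤ B) (hθ0 : 0 < θ) :
    s ≤ Real.sqrt 2 * θ * B := by
  have hc0 : 0 < c := by linarith
  have h5 : Kr * Kr * s ^ 2 ≤ 2 * B ^ 2 := by
    nlinarith [sq_nonneg s, mul_le_mul_of_nonneg_left h1 hK0.le]
  have hsq2 : (Real.sqrt 2) ^ 2 = 2 := Real.sq_sqrt (by norm_num)
  have h6 : s ^ 2 ≤ (Real.sqrt 2 * θ * B) ^ 2 := by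
    have hKθ2 : (Kr * θ) ^ 2 = 1 := by rw [hKθ]; norm_num
    nlinarith [sq_nonneg (θ * B), sq_nonneg s, sq_nonneg θ, mul_pos hK0 hK0]
  exact sq_le_helper hs0 (by positivity) h6
set_option maxHeartbeats 2000000 in
/-- Small gradient norm at the output of a non-restarted epoch
of RISP-Prox (the convention `x^{-1} = x^0` is realized by truncated
subtraction on `ℕ`). -/
theorem risp_prox_no_restart_small_gradient
    {d : ℕ} (hd : 1 ≤ d)
    (f g F : EuclideanSpace ℝ (Fin d) → ℝ) (Lf Lg L ρf ρg ρ : ℝ)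
    (hLdef : L = Lf + Lg) (hρdef : ρ = ρf + ρg) (hL : 0 < L) (hρ : 0 < ρ)
    (hFdef : ∀ w, F w = f w + g w)
    (hfd : Differentiable ℝ f) (hfd2 : Differentiable ℝ (gradient f))
    (hgd : Differentiable ℝ g) (hgd2 : Differentiable ℝ (gradient g))
    (hflip : ∀ a b : EuclideanSpace ℝ (Fin d),
      ‖gradient f a - gradient f b‖ ≤ Lf * ‖a - b‖)
    (hglip : ∀ a b : EuclideanSpace ℝ (Fin d),
      ‖gradient g a - gradient g b‖ ≤ Lg * ‖a - b‖)
    (hfHess : ∀ a b : EuclideanSpace ℝ (Fin d),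
      ‖fderiv ℝ (gradient f) a - fderiv ℝ (gradient f) b‖ ≤ ρf * ‖a - b‖)
    (hgHess : ∀ a b : EuclideanSpace ℝ (Fin d),
      ‖fderiv ℝ (gradient g) a - fderiv ℝ (gradient g) b‖ ≤ ρg * ‖a - b‖)
    (ε η B θ : ℝ) (hε : 0 < ε)
    (hη : η = 1 / (8 * L))
    (hB : B = (1 / 2) * Real.sqrt (ε / ρ))
    (hθ : θ = 4 * (ε * ρ * η ^ 2) ^ ((1 : ℝ) / 4))
    (hθ0 : 0 < θ) (hθ1 : θ < 1)
    (K : ℕ) (hK1 : 1 ≤ K) (hKθ : (K : ℝ) * θ = 1)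
    (x z : ℕ → EuclideanSpace ℝ (Fin d))
    (hz : ∀ k < K, z k = x k + (1 - θ) • (x k - x (k - 1)))
    (hchar : ∀ k < K,
      (1 / η) • (z k - x (k + 1)) = gradient f (x (k + 1)) + gradient g (z k))
    (hno_restart : ∀ k, 1 ≤ k → k ≤ K →
      (k : ℝ) * ∑ t ∈ Finset.range k, ‖x (t + 1) - x t‖ ^ 2 ≤ B ^ 2)
    (K₀ : ℕ) (hK₀lb : K / 2 ≤ K₀) (hK₀ub : K₀ ≤ K - 1)
    (hK₀min : ∀ k, K / 2 ≤ k → k ≤ K - 1 →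
      ‖x (K₀ + 1) - x K₀‖ ≤ ‖x (k + 1) - x k‖)
    (zhat : EuclideanSpace ℝ (Fin d))
    (hzhat : zhat = ((K₀ : ℝ) + 1)⁻¹ • ∑ k ∈ Finset.range (K₀ + 1), z k) :
    ‖gradient F zhat‖ ≤ 45 * ε := by
  -- ## basic positivity and parameter identities
  have hη0 : 0 < η := by rw [hη]; positivity
  have hB0 : 0 ≤ B := by rw [hB]; positivity
  -- nonnegativity of the Lipschitz constants
  have hunit : ∃ e : EuclideanSpace ℝ (Fin d), ‖e - 0‖ = 1 := by
    refine ⟨EuclideanSpace.single (⟨0, hd⟩ : Fin d) (1 : ℝ), ?_⟩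
    simp [EuclideanSpace.norm_single]
  obtain ⟨e, he⟩ := hunit
  have hLf0 : 0 ≤ Lf := by
    have h := hflip e 0; rw [he] at h
    have := norm_nonneg (gradient f e - gradient f 0); linarith
  have hLg0 : 0 ≤ Lg := by
    have h := hglip e 0; rw [he] at h
    have := norm_nonneg (gradient g e - gradient g 0); linarith
  have hρf0 : 0 ≤ ρf := by
    have h := hfHess e 0; rw [he] at h
    have := norm_nonneg (fderiv ℝ (gradient f) e - fderiv ℝ (gradient f) 0); linarith
  have hρg0 : 0 ≤ ρg := by
    have h := hgHess e 0; rw [he] at h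
    have := norm_nonneg (fderiv ℝ (gradient g) e - fderiv ℝ (gradient g) 0); linarith
  -- θ² = 16 √(ερ) η
  have hθ2 : θ ^ 2 = 16 * Real.sqrt (ε * ρ) * η := by
    have hx : (0 : ℝ) ≤ ε * ρ * η ^ 2 := by positivity
    have h1 : ((ε * ρ * η ^ 2) ^ ((1 : ℝ) / 4)) ^ 2
        = (ε * ρ * η ^ 2) ^ ((1 : ℝ) / 2) := by
      rw [← Real.rpow_natCast ((ε * ρ * η ^ 2) ^ ((1 : ℝ) / 4)) 2, ← Real.rpow_mul hx]
      norm_num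
    have h2 : (ε * ρ * η ^ 2) ^ ((1 : ℝ) / 2) = Real.sqrt (ε * ρ) * η := by
      rw [← Real.sqrt_eq_rpow, Real.sqrt_mul (by positivity), Real.sqrt_sq hη0.le]
    rw [hθ, mul_pow, h1, h2]; ring
  -- θ² B = 8 ε η
  have hθB : θ ^ 2 * B = 8 * ε * η := by
    have h2 : Real.sqrt (ε * ρ) * Real.sqrt (ε / ρ) = ε := by
      rw [← Real.sqrt_mul (by positivity)]
      rw [show ε * ρ * (ε / ρ) = ε ^ 2 by field_simp]
      exact Real.sqrt_sq hε.le
    rw [hθ2, hB]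
    nlinarith [h2]
  -- ρ B² = ε / 4
  have hρB : ρ * B ^ 2 = ε / 4 := by
    rw [hB, mul_pow, Real.sq_sqrt (by positivity : (0 : ℝ) ≤ ε / ρ)]
    field_simp
    ring
  -- η Lf ≤ 1/8
  have hηLf : η * Lf ≤ 1 / 8 := by
    have h1 : Lf ≤ L := by rw [hLdef]; linarith
    have h2 : η * L = 1 / 8 := by rw [hη]; field_simp
    nlinarith [hη0, h1, h2, hL]
  have hηLf0 : 0 ≤ η * Lf := by positivity
  -- counting facts
  have hKpos : (0 : ℝ) < K := by exact_mod_cast hK1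
  have hK₀K : K₀ < K := by omega
  have hn0 : (0 : ℝ) < (K₀ : ℝ) + 1 := by positivity
  have h2θn : 1 ≤ 2 * θ * ((K₀ : ℝ) + 1) := by
    have h1 : K ≤ 2 * (K₀ + 1) := by omega
    have h2 : (K : ℝ) ≤ 2 * ((K₀ : ℝ) + 1) := by exact_mod_cast h1
    calc (1 : ℝ) = (K : ℝ) * θ := hKθ.symm
      _ ≤ (2 * ((K₀ : ℝ) + 1)) * θ := mul_le_mul_of_nonneg_right h2 hθ0.le
      _ = 2 * θ * ((K₀ : ℝ) + 1) := by ring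
  -- ## step-size bounds
  have hsq : ∀ a b : ℝ, 0 ≤ a → 0 ≤ b → a ^ 2 ≤ b ^ 2 → a ≤ b := fun a b ha hb h =>
    sq_le_helper ha hb h
  -- single-step bound
  have hstep : ∀ t, t + 1 ≤ K → ‖x (t + 1) - x t‖ ≤ B := by
    intro t ht
    have h1 := hno_restart (t + 1) (by omega) ht
    have h2 : ‖x (t + 1) - x t‖ ^ 2 ≤ ∑ u ∈ Finset.range (t + 1), ‖x (u + 1) - x u‖ ^ 2 :=
      Finset.single_le_sum (f := fun u => ‖x (u + 1) - x u‖ ^ 2)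
        (fun i _ => sq_nonneg _) (Finset.self_mem_range_succ t)
    have h3 : (0 : ℝ) ≤ ∑ u ∈ Finset.range (t + 1), ‖x (u + 1) - x u‖ ^ 2 :=
      Finset.sum_nonneg fun i _ => sq_nonneg _
    have h4 : (1 : ℝ) ≤ ((t + 1 : ℕ) : ℝ) := by
      push_cast
      linarith [Nat.cast_nonneg (α := ℝ) t]
    refine hsq _ _ (norm_nonneg _) hB0 ?_
    have h5 : ∑ u ∈ Finset.range (t + 1), ‖x (u + 1) - x u‖ ^ 2 ≤ B ^ 2 := by
      calc ∑ u ∈ Finset.range (t + 1), ‖x (u + 1) - x u‖ ^ 2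
          = 1 * ∑ u ∈ Finset.range (t + 1), ‖x (u + 1) - x u‖ ^ 2 := (one_mul _).symm
        _ ≤ ((t + 1 : ℕ) : ℝ) * ∑ u ∈ Finset.range (t + 1), ‖x (u + 1) - x u‖ ^ 2 :=
            mul_le_mul_of_nonneg_right h4 h3
        _ ≤ B ^ 2 := h1
    exact h2.trans h5
  -- distance to the anchor
  have hxk : ∀ k, k ≤ K → ‖x k - x 0‖ ≤ B := by
    intro k hk
    rcases Nat.eq_zero_or_pos k with rfl | hk0
    · simpa using hB0
    have e1 : x k - x 0 = ∑ t ∈ Finset.range k, (x (t + 1) - x t) :=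
      (Finset.sum_range_sub (fun i => x i) k).symm
    rw [e1]
    refine le_trans (norm_sum_le _ _) ?_
    refine hsq _ _ (Finset.sum_nonneg fun i _ => norm_nonneg _) hB0 ?_
    have h2 : (∑ t ∈ Finset.range k, ‖x (t + 1) - x t‖) ^ 2
        ≤ (k : ℝ) * ∑ t ∈ Finset.range k, ‖x (t + 1) - x t‖ ^ 2 := by
      simpa using sq_sum_le_card_mul_sum_sq (s := Finset.range k)
        (f := fun t => ‖x (t + 1) - x t‖)
    exact h2.trans (hno_restart k hk0 hk)
  -- minimal step in the second half
  have hs2 : ‖x (K₀ + 1) - x K₀‖ ≤ Real.sqrt 2 * θ * B := by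
    set s := ‖x (K₀ + 1) - x K₀‖ with hsdef
    have hcard : (Finset.Ico (K / 2) K).card = K - K / 2 := Nat.card_Ico _ _
    have hlow : ∀ t ∈ Finset.Ico (K / 2) K, s ^ 2 ≤ ‖x (t + 1) - x t‖ ^ 2 := by
      intro t ht
      rw [Finset.mem_Ico] at ht
      have := hK₀min t ht.1 (by omega)
      nlinarith [norm_nonneg (x (K₀ + 1) - x K₀)]
    have h1 : ((K - K / 2 : ℕ) : ℝ) * s ^ 2 ≤ ∑ t ∈ Finset.Ico (K / 2) K, ‖x (t + 1) - x t‖ ^ 2 := by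
      calc ((K - K / 2 : ℕ) : ℝ) * s ^ 2 = ∑ _t ∈ Finset.Ico (K / 2) K, s ^ 2 := by
            rw [Finset.sum_const, hcard, nsmul_eq_mul]
        _ ≤ _ := Finset.sum_le_sum hlow
    have h2 : ∑ t ∈ Finset.Ico (K / 2) K, ‖x (t + 1) - x t‖ ^ 2
        ≤ ∑ t ∈ Finset.range K, ‖x (t + 1) - x t‖ ^ 2 := by
      refine Finset.sum_le_sum_of_subset_of_nonneg ?_ (fun i _ _ => sq_nonneg _)
      intro t ht
      rw [Finset.mem_Ico] at ht
      exact Finset.mem_range.2 ht.2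
    have h3 := hno_restart K hK1 le_rfl
    have hc2 : (K : ℝ) ≤ 2 * ((K - K / 2 : ℕ) : ℝ) := by
      have : K ≤ 2 * (K - K / 2) := by omega
      exact_mod_cast this
    exact minstep_arith (norm_nonneg _) (h1.trans h2) h3 hc2 hKpos hKθ hB0 hθ0
  -- z bounds
  have hzb : ∀ k, k ≤ K₀ → ‖z k - x 0‖ ≤ 2 * B := by
    intro k hk
    have hkK : k < K := lt_of_le_of_lt hk hK₀K
    rw [hz k hkK]
    have e1 : x k + (1 - θ) • (x k - x (k - 1)) - x 0
        = (x k - x 0) + (1 - θ) • (x k - x (k - 1)) := by abel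
    rw [e1]
    refine le_trans (norm_add_le _ _) ?_
    have h1 : ‖x k - x 0‖ ≤ B := hxk k (by omega)
    have h2 : ‖(1 - θ) • (x k - x (k - 1))‖ ≤ B := by
      rw [norm_smul, Real.norm_eq_abs, abs_of_nonneg (by linarith)]
      rcases Nat.eq_zero_or_pos k with rfl | hk0
      · simpa using hB0
      · have hk1 : k - 1 + 1 = k := by omega
        have h3 : ‖x k - x (k - 1)‖ ≤ B := by
          have := hstep (k - 1) (by omega)
          rwa [hk1] at this
        calc (1 - θ) * ‖x k - x (k - 1)‖ ≤ 1 * ‖x k - x (k - 1)‖ :=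
              mul_le_mul_of_nonneg_right (by linarith) (norm_nonneg _)
          _ ≤ B := by rw [one_mul]; exact h3
    linarith
  have hn0' : ((K₀ : ℝ) + 1) ≠ 0 := hn0.ne'
  have hcast : ((K₀ + 1 : ℕ) : ℝ) = (K₀ : ℝ) + 1 := by push_cast; ring
  -- zhat bound
  have hzhat0 : ‖zhat - x 0‖ ≤ 2 * B := by
    have e1 : zhat - x 0 = ((K₀ : ℝ) + 1)⁻¹ • ∑ k ∈ Finset.range (K₀ + 1), (z k - x 0) := by
      rw [Finset.sum_sub_distrib, smul_sub, Finset.sum_const, Finset.card_range,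
        ← Nat.cast_smul_eq_nsmul ℝ, hcast, inv_smul_smul₀ hn0', hzhat]
    rw [e1, norm_smul, Real.norm_eq_abs, abs_of_pos (by positivity)]
    have h1 : ‖∑ k ∈ Finset.range (K₀ + 1), (z k - x 0)‖
        ≤ ∑ k ∈ Finset.range (K₀ + 1), ‖z k - x 0‖ := norm_sum_le _ _
    have h2 : ∑ k ∈ Finset.range (K₀ + 1), ‖z k - x 0‖ ≤ ((K₀ : ℝ) + 1) * (2 * B) := by
      calc ∑ k ∈ Finset.range (K₀ + 1), ‖z k - x 0‖
          ≤ ∑ _k ∈ Finset.range (K₀ + 1), (2 * B) :=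
            Finset.sum_le_sum fun k hk => hzb k (by
              have := Finset.mem_range.1 hk; omega)
        _ = ((K₀ : ℝ) + 1) * (2 * B) := by
            rw [Finset.sum_const, Finset.card_range, nsmul_eq_mul, hcast]
    calc ((K₀ : ℝ) + 1)⁻¹ * ‖∑ k ∈ Finset.range (K₀ + 1), (z k - x 0)‖
        ≤ ((K₀ : ℝ) + 1)⁻¹ * (((K₀ : ℝ) + 1) * (2 * B)) := by
          exact mul_le_mul_of_nonneg_left (h1.trans h2) (by positivity)
      _ = 2 * B := by field_simp
  -- ## gradient of F splits
  have hgradF : gradient F zhat = gradient f zhat + gradient g zhat := by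
    have hFeq : F = fun w => f w + g w := funext hFdef
    rw [hFeq]
    unfold gradient
    rw [fderiv_fun_add (hfd zhat) (hgd zhat), map_add]
  -- Hessian operator norms
  have hHfn : ‖fderiv ℝ (gradient f) zhat‖ ≤ Lf :=
    norm_fderiv_le_of_lip' ℝ hLf0 (Filter.Eventually.of_forall fun y => hflip y zhat)
  have hHgn : ‖fderiv ℝ (gradient g) zhat‖ ≤ Lg :=
    norm_fderiv_le_of_lip' ℝ hLg0 (Filter.Eventually.of_forall fun y => hglip y zhat)
  have hK₀1K : K₀ + 1 ≤ K := by omega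
  -- ## telescoping
  have htelT : ∑ k ∈ Finset.range (K₀ + 1), (z k - x (k + 1))
      = (x K₀ - x (K₀ + 1)) - θ • (x K₀ - x 0) := by
    have hzk : ∀ k ∈ Finset.range (K₀ + 1), z k - x (k + 1)
        = (x k - x (k + 1)) + (1 - θ) • (x k - x (k - 1)) := by
      intro k hk
      rw [hz k (lt_of_lt_of_le (Finset.mem_range.1 hk) hK₀1K)]
      abel
    rw [Finset.sum_congr rfl hzk, Finset.sum_add_distrib, ← Finset.smul_sum,
      Finset.sum_range_sub' (fun i => x i), tel_aux]
    module
  have hTnorm : ‖∑ k ∈ Finset.range (K₀ + 1), (z k - x (k + 1))‖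
      ≤ (Real.sqrt 2 + 1) * θ * B := by
    rw [htelT]
    refine le_trans (norm_sub_le _ _) ?_
    have h1 : ‖x K₀ - x (K₀ + 1)‖ ≤ Real.sqrt 2 * θ * B := by
      rw [norm_sub_rev]; exact hs2
    have h2 : ‖θ • (x K₀ - x 0)‖ ≤ θ * B := by
      rw [norm_smul, Real.norm_eq_abs, abs_of_pos hθ0]
      exact mul_le_mul_of_nonneg_left (hxk K₀ (by omega)) hθ0.le
    linarith
  -- ## sum of the characterization equations
  have hG : ∑ k ∈ Finset.range (K₀ + 1), (gradient f (x (k + 1)) + gradient g (z k))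
      = (1 / η) • ∑ k ∈ Finset.range (K₀ + 1), (z k - x (k + 1)) := by
    rw [Finset.smul_sum]
    exact Finset.sum_congr rfl fun k hk =>
      (hchar k (lt_of_lt_of_le (Finset.mem_range.1 hk) hK₀1K)).symm
  -- ## centered sums
  have hz0s : ∑ k ∈ Finset.range (K₀ + 1), (z k - zhat) = 0 := by
    rw [Finset.sum_sub_distrib, Finset.sum_const, Finset.card_range,
      ← Nat.cast_smul_eq_nsmul ℝ, hcast, hzhat, smul_inv_smul₀ hn0', sub_self]
  have hxs : ∑ k ∈ Finset.range (K₀ + 1), (x (k + 1) - zhat)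
      = -∑ k ∈ Finset.range (K₀ + 1), (z k - x (k + 1)) := by
    have h1 : ∀ k ∈ Finset.range (K₀ + 1), x (k + 1) - zhat
        = (z k - zhat) - (z k - x (k + 1)) := fun k _ => by abel
    rw [Finset.sum_congr rfl h1, Finset.sum_sub_distrib, hz0s, zero_sub]
  -- ## Taylor remainders
  have hx3B : ∀ k ∈ Finset.range (K₀ + 1), ‖x (k + 1) - zhat‖ ≤ 3 * B := by
    intro k hk
    have hk' : k + 1 ≤ K := by have := Finset.mem_range.1 hk; omega
    calc ‖x (k + 1) - zhat‖ ≤ ‖x (k + 1) - x 0‖ + ‖zhat - x 0‖ := by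
          rw [show x (k + 1) - zhat = (x (k + 1) - x 0) - (zhat - x 0) by abel]
          exact norm_sub_le _ _
      _ ≤ B + 2 * B := add_le_add (hxk _ hk') hzhat0
      _ = 3 * B := by ring
  have hRf : ∀ k ∈ Finset.range (K₀ + 1),
      ‖gradient f (x (k + 1)) - gradient f zhat
        - fderiv ℝ (gradient f) zhat (x (k + 1) - zhat)‖ ≤ ρf / 2 * (9 * B ^ 2) := by
    intro k hk
    refine le_trans (taylor_aux (gradient f) hfd2 ρf hfHess zhat (x (k + 1))) ?_
    have h3 := hx3B k hk
    have h9 : ‖x (k + 1) - zhat‖ ^ 2 ≤ 9 * B ^ 2 := by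
      nlinarith [norm_nonneg (x (k + 1) - zhat)]
    have : ρf / 2 * ‖x (k + 1) - zhat‖ ^ 2 ≤ ρf / 2 * (9 * B ^ 2) :=
      mul_le_mul_of_nonneg_left h9 (by linarith)
    linarith
  have hRg : ∀ k ∈ Finset.range (K₀ + 1),
      ‖gradient g (z k) - gradient g zhat
        - fderiv ℝ (gradient g) zhat (z k - zhat)‖ ≤ ρg / 2 * ‖z k - zhat‖ ^ 2 :=
    fun k _ => taylor_aux (gradient g) hgd2 ρg hgHess zhat (z k)
  have hvar : ∑ k ∈ Finset.range (K₀ + 1), ‖z k - zhat‖ ^ 2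
      ≤ ((K₀ : ℝ) + 1) * (4 * B ^ 2) := by
    have h1 := variance_aux (K₀ + 1) (Nat.succ_pos K₀) z (x 0) zhat
      (by rw [hcast]; exact hzhat)
    refine h1.trans ?_
    calc ∑ k ∈ Finset.range (K₀ + 1), ‖z k - x 0‖ ^ 2
        ≤ ∑ _k ∈ Finset.range (K₀ + 1), (4 * B ^ 2) := Finset.sum_le_sum (fun k hk => by
          have h2 := hzb k (by have := Finset.mem_range.1 hk; omega)
          nlinarith [norm_nonneg (z k - x 0)])
      _ = ((K₀ : ℝ) + 1) * (4 * B ^ 2) := by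
          rw [Finset.sum_const, Finset.card_range, nsmul_eq_mul, hcast]
  -- ## the key identity
  have hkey : ((K₀ : ℝ) + 1) • gradient F zhat
      = (∑ k ∈ Finset.range (K₀ + 1), (gradient f (x (k + 1)) + gradient g (z k)))
        + fderiv ℝ (gradient f) zhat (∑ k ∈ Finset.range (K₀ + 1), (z k - x (k + 1)))
        - (∑ k ∈ Finset.range (K₀ + 1), (gradient f (x (k + 1)) - gradient f zhat
            - fderiv ℝ (gradient f) zhat (x (k + 1) - zhat)))
        - (∑ k ∈ Finset.range (K₀ + 1), (gradient g (z k) - gradient g zhat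
            - fderiv ℝ (gradient g) zhat (z k - zhat))) := by
    have hc : ∀ k ∈ Finset.range (K₀ + 1),
        gradient F zhat
          = (gradient f (x (k + 1)) + gradient g (z k))
            - (fderiv ℝ (gradient f) zhat (x (k + 1) - zhat)
               + fderiv ℝ (gradient g) zhat (z k - zhat))
            - (gradient f (x (k + 1)) - gradient f zhat
               - fderiv ℝ (gradient f) zhat (x (k + 1) - zhat))
            - (gradient g (z k) - gradient g zhat
               - fderiv ℝ (gradient g) zhat (z k - zhat)) := by
      intro k _
      rw [hgradF]
      abel
    calc ((K₀ : ℝ) + 1) • gradient F zhat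
        = ∑ _k ∈ Finset.range (K₀ + 1), gradient F zhat := by
          rw [Finset.sum_const, Finset.card_range, ← Nat.cast_smul_eq_nsmul ℝ, hcast]
      _ = ∑ k ∈ Finset.range (K₀ + 1),
            ((gradient f (x (k + 1)) + gradient g (z k))
              - (fderiv ℝ (gradient f) zhat (x (k + 1) - zhat)
                 + fderiv ℝ (gradient g) zhat (z k - zhat))
              - (gradient f (x (k + 1)) - gradient f zhat
                 - fderiv ℝ (gradient f) zhat (x (k + 1) - zhat))
              - (gradient g (z k) - gradient g zhat
                 - fderiv ℝ (gradient g) zhat (z k - zhat))) := Finset.sum_congr rfl hc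
      _ = _ := by
          have m1 : ∑ k ∈ Finset.range (K₀ + 1), fderiv ℝ (gradient f) zhat (x (k + 1) - zhat)
              = -(fderiv ℝ (gradient f) zhat
                  (∑ k ∈ Finset.range (K₀ + 1), (z k - x (k + 1)))) := by
            have h := map_sum (fderiv ℝ (gradient f) zhat)
              (fun k => x (k + 1) - zhat) (Finset.range (K₀ + 1))
            rw [hxs, map_neg] at h
            exact h.symm
          have m2 : ∑ k ∈ Finset.range (K₀ + 1), fderiv ℝ (gradient g) zhat (z k - zhat)
              = 0 := by
            have h := map_sum (fderiv ℝ (gradient g) zhat)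
              (fun k => z k - zhat) (Finset.range (K₀ + 1))
            rw [hz0s, map_zero] at h
            exact h.symm
          simp only [Finset.sum_sub_distrib, Finset.sum_add_distrib]
          rw [m1, m2]
          simp only [Finset.sum_sub_distrib]
          abel
  -- ## the main norm bound
  have hmain : ((K₀ : ℝ) + 1) * ‖gradient F zhat‖
      ≤ (1 / η) * ((Real.sqrt 2 + 1) * θ * B) + Lf * ((Real.sqrt 2 + 1) * θ * B)
        + ((K₀ : ℝ) + 1) * (ρf / 2 * (9 * B ^ 2))
        + ρg / 2 * (((K₀ : ℝ) + 1) * (4 * B ^ 2)) := by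
    have h0 : ((K₀ : ℝ) + 1) * ‖gradient F zhat‖ = ‖((K₀ : ℝ) + 1) • gradient F zhat‖ := by
      rw [norm_smul, Real.norm_eq_abs, abs_of_pos hn0]
    rw [h0, hkey]
    have n1 : ‖∑ k ∈ Finset.range (K₀ + 1), (gradient f (x (k + 1)) + gradient g (z k))‖
        ≤ (1 / η) * ((Real.sqrt 2 + 1) * θ * B) := by
      rw [hG, norm_smul, Real.norm_eq_abs, abs_of_pos (by positivity)]
      exact mul_le_mul_of_nonneg_left hTnorm (by positivity)
    have n2 : ‖fderiv ℝ (gradient f) zhat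
          (∑ k ∈ Finset.range (K₀ + 1), (z k - x (k + 1)))‖
        ≤ Lf * ((Real.sqrt 2 + 1) * θ * B) := by
      refine le_trans (ContinuousLinearMap.le_opNorm _ _) ?_
      exact mul_le_mul hHfn hTnorm (norm_nonneg _) hLf0
    have n3 : ‖∑ k ∈ Finset.range (K₀ + 1), (gradient f (x (k + 1)) - gradient f zhat
          - fderiv ℝ (gradient f) zhat (x (k + 1) - zhat))‖
        ≤ ((K₀ : ℝ) + 1) * (ρf / 2 * (9 * B ^ 2)) := by
      refine le_trans (norm_sum_le _ _) ?_
      calc ∑ k ∈ Finset.range (K₀ + 1), ‖gradient f (x (k + 1)) - gradient f zhat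
              - fderiv ℝ (gradient f) zhat (x (k + 1) - zhat)‖
          ≤ ∑ _k ∈ Finset.range (K₀ + 1), (ρf / 2 * (9 * B ^ 2)) := Finset.sum_le_sum hRf
        _ = ((K₀ : ℝ) + 1) * (ρf / 2 * (9 * B ^ 2)) := by
            rw [Finset.sum_const, Finset.card_range, nsmul_eq_mul, hcast]
    have n4 : ‖∑ k ∈ Finset.range (K₀ + 1), (gradient g (z k) - gradient g zhat
          - fderiv ℝ (gradient g) zhat (z k - zhat))‖
        ≤ ρg / 2 * (((K₀ : ℝ) + 1) * (4 * B ^ 2)) := by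
      refine le_trans (norm_sum_le _ _) ?_
      calc ∑ k ∈ Finset.range (K₀ + 1), ‖gradient g (z k) - gradient g zhat
              - fderiv ℝ (gradient g) zhat (z k - zhat)‖
          ≤ ∑ k ∈ Finset.range (K₀ + 1), (ρg / 2 * ‖z k - zhat‖ ^ 2) := Finset.sum_le_sum hRg
        _ = ρg / 2 * ∑ k ∈ Finset.range (K₀ + 1), ‖z k - zhat‖ ^ 2 := by
            rw [Finset.mul_sum]
        _ ≤ ρg / 2 * (((K₀ : ℝ) + 1) * (4 * B ^ 2)) :=
            mul_le_mul_of_nonneg_left hvar (by linarith)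
    refine le_trans (norm_sub_le _ _) (le_trans (add_le_add_left (norm_sub_le _ _) _) ?_)
    refine le_trans (add_le_add_left (add_le_add_left (norm_add_le _ _) _) _) ?_
    linarith [n1, n2, n3, n4]
  -- ## final arithmetic
  have hc10 : 0 ≤ (Real.sqrt 2 + 1) * θ * B :=
    mul_nonneg (mul_nonneg (by positivity) hθ0.le) hB0
  have hA0 : 0 ≤ (1 / η) * ((Real.sqrt 2 + 1) * θ * B) + Lf * ((Real.sqrt 2 + 1) * θ * B) :=
    add_nonneg (mul_nonneg (by positivity) hc10) (mul_nonneg hLf0 hc10)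
  have hfinal1 : ‖gradient F zhat‖
      ≤ 2 * θ * ((1 / η) * ((Real.sqrt 2 + 1) * θ * B) + Lf * ((Real.sqrt 2 + 1) * θ * B))
        + (ρf / 2 * (9 * B ^ 2) + ρg / 2 * (4 * B ^ 2)) := by
    nlinarith [hmain, hn0, hA0, mul_nonneg (by linarith [h2θn] : (0:ℝ) ≤ 2 * θ * ((K₀ : ℝ) + 1) - 1) hA0]
  have hterm1 : 2 * θ * ((1 / η) * ((Real.sqrt 2 + 1) * θ * B)
        + Lf * ((Real.sqrt 2 + 1) * θ * B)) ≤ 18 * (Real.sqrt 2 + 1) * ε := by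
    have e1 : 2 * θ * ((1 / η) * ((Real.sqrt 2 + 1) * θ * B)
          + Lf * ((Real.sqrt 2 + 1) * θ * B))
        = 2 * (Real.sqrt 2 + 1) * ((θ ^ 2 * B) * (1 / η) + (θ ^ 2 * B) * Lf) := by ring
    rw [e1, hθB]
    have e2 : 8 * ε * η * (1 / η) = 8 * ε := by field_simp
    rw [e2]
    have e3 : 8 * ε * η * Lf ≤ ε := by
      have h := mul_le_mul_of_nonneg_left hηLf (by linarith : (0:ℝ) ≤ 8 * ε)
      linarith [h]
    have e4 := mul_le_mul_of_nonneg_left e3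
      (by positivity : (0:ℝ) ≤ 2 * (Real.sqrt 2 + 1))
    linarith [e4]
  have hterm2 : ρf / 2 * (9 * B ^ 2) + ρg / 2 * (4 * B ^ 2) ≤ 9 / 8 * ε := by
    have h1 : ρf * B ^ 2 + ρg * B ^ 2 = ε / 4 := by rw [← hρB, hρdef]; ring
    linarith [mul_nonneg hρg0 (sq_nonneg B)]
  have hsqrt2 : Real.sqrt 2 ≤ 1.4375 := by
    rw [show (1.4375 : ℝ) = Real.sqrt (1.4375 ^ 2) from (Real.sqrt_sq (by norm_num)).symm]
    exact Real.sqrt_le_sqrt (by norm_num)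
  have hlast := mul_le_mul_of_nonneg_right hsqrt2 hε.le
  calc ‖gradient F zhat‖
      ≤ 2 * θ * ((1 / η) * ((Real.sqrt 2 + 1) * θ * B) + Lf * ((Real.sqrt 2 + 1) * θ * B))
        + (ρf / 2 * (9 * B ^ 2) + ρg / 2 * (4 * B ^ 2)) := hfinal1
    _ ≤ 18 * (Real.sqrt 2 + 1) * ε + 9 / 8 * ε := add_le_add hterm1 hterm2
    _ ≤ 45 * ε := by nlinarith [hlast, hε]
end

section
/- (Energy decrease for the heavy-ball ODE up to a restart time.) Let F : ℝ^d → ℝ be continuously differentiable, α > 0, and let x : [0,∞) → ℝ^d be twice differentiable and solve the heavy-ball ODE ẍ_t + α·ẋ_t + ∇F(x_t) = 0 for all t ≥ 0, with ẋ_0 = 0. Let B ≥ 0 and 0 < T ≤ T_max be such that T·∫₀ᵀ ‖ẋ_t‖² dt = B². Then F(x_T) − F(x_0) ≤ −α·B²/T_max. -/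
open RealInnerProductSpace

/-- Energy decrease for the heavy-ball ODE up to a restart time.
The curve `x` has first derivative `v` and second derivative `a` on `[0,∞)`. -/
theorem heavy_ball_energy_decrease_at_restart
    {d : ℕ} (hd : 1 ≤ d)
    (F : EuclideanSpace ℝ (Fin d) → ℝ) (hF : ContDiff ℝ 1 F)
    (α : ℝ) (hα : 0 < α)
    (x v a : ℝ → EuclideanSpace ℝ (Fin d))
    (hx : ∀ t : ℝ, 0 ≤ t → HasDerivAt x (v t) t)
    (hv : ∀ t : ℝ, 0 ≤ t → HasDerivAt v (a t) t)
    (hode : ∀ t : ℝ, 0 ≤ t → a t + α • v t + gradient F (x t) = 0)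
    (hv0 : v 0 = 0)
    (B Tmax T : ℝ) (hB : 0 ≤ B) (hT : 0 < T) (hTmax : T ≤ Tmax)
    (hrestart : T * ∫ t in (0 : ℝ)..T, ‖v t‖ ^ 2 = B ^ 2) :
    F (x T) - F (x 0) ≤ -α * B ^ 2 / Tmax := by
  set E : ℝ → ℝ := fun t => F (x t) + (1/2) * ⟪v t, v t⟫ with hE_def
  have hE : ∀ t : ℝ, 0 ≤ t → HasDerivAt E (-(α * ‖v t‖ ^ 2)) t := by
    intro t ht
    have hgrad : HasGradientAt F (gradient F (x t)) (x t) :=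
      ((hF.differentiable one_ne_zero) (x t)).hasGradientAt
    have h1 : HasDerivAt (fun s => F (x s)) ⟪gradient F (x t), v t⟫ t := by
      have := hgrad.hasFDerivAt.comp_hasDerivAt t (hx t ht)
      simp at this ⊢; exact this
    have h2 : HasDerivAt (fun s => ⟪v s, v s⟫) (⟪v t, a t⟫ + ⟪a t, v t⟫) t :=
      (hv t ht).inner ℝ (hv t ht)
    have h3 := h1.add (h2.const_mul (1/2))
    refine HasDerivAt.congr_deriv h3 ?_
    have ha : a t = -(α • v t) - gradient F (x t) := by
      have := hode t ht
      linear_combination (norm := module) this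
    rw [ha]
    simp only [inner_sub_left, inner_sub_right, inner_neg_left, inner_neg_right,
      real_inner_smul_left, real_inner_smul_right, real_inner_self_eq_norm_sq,
      real_inner_comm (gradient F (x t)) (v t)]
    ring
  have hvcont : ContinuousOn v (Set.Icc 0 T) := fun s hs =>
    (hv s hs.1).continuousAt.continuousWithinAt
  have hint : IntervalIntegrable (fun t => -(α * ‖v t‖ ^ 2)) MeasureTheory.volume 0 T := by
    apply ContinuousOn.intervalIntegrable
    rw [Set.uIcc_of_le hT.le]
    exact (hvcont.norm.pow 2).const_smul α |>.neg
  have hftc : ∫ t in (0:ℝ)..T, -(α * ‖v t‖ ^ 2) = E T - E 0 := by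
    apply intervalIntegral.integral_eq_sub_of_hasDerivAt
    · intro s hs
      rw [Set.uIcc_of_le hT.le] at hs
      exact hE s hs.1
    · exact hint
  have hint2 : IntervalIntegrable (fun t => ‖v t‖ ^ 2) MeasureTheory.volume 0 T := by
    apply ContinuousOn.intervalIntegrable
    rw [Set.uIcc_of_le hT.le]
    exact hvcont.norm.pow 2
  have hI : ∫ t in (0:ℝ)..T, -(α * ‖v t‖ ^ 2) = -(α * ∫ t in (0:ℝ)..T, ‖v t‖ ^ 2) := by
    rw [intervalIntegral.integral_neg, intervalIntegral.integral_const_mul]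
  have hIval : (∫ t in (0:ℝ)..T, ‖v t‖ ^ 2) = B ^ 2 / T := by
    field_simp at hrestart ⊢
    linarith [hrestart]
  have hET : E T - E 0 = -(α * (B ^ 2 / T)) := by
    rw [← hftc, hI, hIval]
  have hVT : 0 ≤ ⟪v T, v T⟫ := real_inner_self_nonneg
  have hE0 : E 0 = F (x 0) := by simp [hE_def, hv0]
  have hstep : F (x T) - F (x 0) ≤ -(α * (B ^ 2 / T)) := by
    have hETval : E T = F (x T) + (1/2) * ⟪v T, v T⟫ := rfl
    rw [hETval, hE0] at hET
    linarith [hVT]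
  have hmono : α * (B ^ 2 / Tmax) ≤ α * (B ^ 2 / T) := by
    apply mul_le_mul_of_nonneg_left _ hα.le
    apply div_le_div_of_nonneg_left (by positivity) hT hTmax
  calc F (x T) - F (x 0) ≤ -(α * (B ^ 2 / T)) := hstep
    _ ≤ -(α * (B ^ 2 / Tmax)) := by linarith
    _ = -α * B ^ 2 / Tmax := by ring
end

section
/- (Average gradient bound along a heavy-ball trajectory without restart.) Let F : ℝ^d → ℝ be continuously differentiable, α > 0, T_max > 0, B ≥ 0, and let x : [0,∞) → ℝ^d be twice differentiable and solve the heavy-ball ODE ẍ_t + α·ẋ_t + ∇F(x_t) = 0 for all t ≥ 0, with ẋ_0 = 0. Assume that for every T ∈ [0, T_max], T·∫₀ᵀ ‖ẋ_t‖² dt ≤ B². Let K₀ ∈ [T_max/2, T_max] be a minimizer of t ↦ ‖ẋ_t‖ over [T_max/2, T_max] (i.e. ‖ẋ_{K₀}‖ ≤ ‖ẋ_t‖ for all t in this interval). Then ‖(1/K₀)·∫₀^{K₀} ∇F(x_s) ds‖ ≤ 2√2·B/T_max² + 2·α·B/T_max. -/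
set_option maxHeartbeats 1000000 in
/-- Average gradient bound along a heavy-ball trajectory
without restart. -/
theorem heavy_ball_average_gradient_bound
    {d : ℕ} (hd : 1 ≤ d)
    (F : EuclideanSpace ℝ (Fin d) → ℝ) (hF : ContDiff ℝ 1 F)
    (α Tmax B : ℝ) (hα : 0 < α) (hTmax : 0 < Tmax) (hB : 0 ≤ B)
    (x v a : ℝ → EuclideanSpace ℝ (Fin d))
    (hx : ∀ t : ℝ, 0 ≤ t → HasDerivAt x (v t) t)
    (hv : ∀ t : ℝ, 0 ≤ t → HasDerivAt v (a t) t)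
    (hode : ∀ t : ℝ, 0 ≤ t → a t + α • v t + gradient F (x t) = 0)
    (hv0 : v 0 = 0)
    (hnorestart : ∀ T : ℝ, 0 ≤ T → T ≤ Tmax →
      T * ∫ t in (0 : ℝ)..T, ‖v t‖ ^ 2 ≤ B ^ 2)
    (K₀ : ℝ) (hK₀lb : Tmax / 2 ≤ K₀) (hK₀ub : K₀ ≤ Tmax)
    (hK₀min : ∀ t : ℝ, Tmax / 2 ≤ t → t ≤ Tmax → ‖v K₀‖ ≤ ‖v t‖) :
    ‖K₀⁻¹ • ∫ s in (0 : ℝ)..K₀, gradient F (x s)‖ ≤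
      2 * Real.sqrt 2 * B / Tmax ^ 2 + 2 * α * B / Tmax := by
  have hK₀pos : 0 < K₀ := lt_of_lt_of_le (by linarith) hK₀lb
  have hK₀0 : (0:ℝ) ≤ K₀ := hK₀pos.le
  -- continuity facts
  have hxc : ∀ t : ℝ, 0 ≤ t → ContinuousAt x t := fun t ht => (hx t ht).continuousAt
  have hvc : ∀ t : ℝ, 0 ≤ t → ContinuousAt v t := fun t ht => (hv t ht).continuousAt
  have hgradc : Continuous (gradient F) := by
    have : Continuous (fderiv ℝ F) := hF.continuous_fderiv one_ne_zero
    exact (InnerProductSpace.toDual ℝ _).symm.continuous.comp this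
  have hvcon : ∀ {s t : ℝ}, 0 ≤ s → ContinuousOn v (Set.Icc s t) := by
    intro s t hs
    exact fun u hu => ((hvc u (le_trans hs hu.1)).continuousWithinAt)
  have hxcon : ∀ {s t : ℝ}, 0 ≤ s → ContinuousOn x (Set.Icc s t) := by
    intro s t hs
    exact fun u hu => ((hxc u (le_trans hs hu.1)).continuousWithinAt)
  -- a agrees with a continuous function on [0, ∞)
  have ha_eq : ∀ t : ℝ, 0 ≤ t → a t = -(α • v t) - gradient F (x t) := by
    intro t ht
    have := hode t ht
    have h : a t = -(α • v t + gradient F (x t)) := by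
      rw [eq_neg_iff_add_eq_zero]; rw [← add_assoc]; exact this
    rw [h]; abel
  have hacon : ∀ {s t : ℝ}, 0 ≤ s → ContinuousOn a (Set.Icc s t) := by
    intro s t hs
    have hc : ContinuousOn (fun u => -(α • v u) - gradient F (x u)) (Set.Icc s t) :=
      (((hvcon hs).const_smul α).neg).sub (hgradc.comp_continuousOn (hxcon hs))
    exact hc.congr fun u hu => ha_eq u (le_trans hs hu.1)
  -- interval integrabilities on [0, K₀]
  have hintv : IntervalIntegrable v MeasureTheory.volume 0 K₀ := by
    apply ContinuousOn.intervalIntegrable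
    rw [Set.uIcc_of_le hK₀0]; exact hvcon le_rfl
  have hinta : IntervalIntegrable a MeasureTheory.volume 0 K₀ := by
    apply ContinuousOn.intervalIntegrable
    rw [Set.uIcc_of_le hK₀0]; exact hacon le_rfl
  have hintg : IntervalIntegrable (fun s => gradient F (x s)) MeasureTheory.volume 0 K₀ := by
    apply ContinuousOn.intervalIntegrable
    rw [Set.uIcc_of_le hK₀0]; exact hgradc.comp_continuousOn (hxcon le_rfl)
  -- FTC : ∫ a = v K₀
  have hFTC : (∫ s in (0:ℝ)..K₀, a s) = v K₀ := by
    have := intervalIntegral.integral_eq_sub_of_hasDerivAt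
      (f := v) (f' := a) (a := (0:ℝ)) (b := K₀)
      (fun t ht => hv t (by rw [Set.uIcc_of_le hK₀0] at ht; exact ht.1)) hinta
    rw [this, hv0, sub_zero]
  -- rewrite the gradient integral
  have hgr : (∫ s in (0:ℝ)..K₀, gradient F (x s)) = -(v K₀) - α • ∫ s in (0:ℝ)..K₀, v s := by
    have h1 : (∫ s in (0:ℝ)..K₀, gradient F (x s)) =
        ∫ s in (0:ℝ)..K₀, (-(a s) - α • v s) := by
      apply intervalIntegral.integral_congr
      intro s hs
      rw [Set.uIcc_of_le hK₀0] at hs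
      have h : gradient F (x s) = -(a s + α • v s) := by
        rw [eq_neg_iff_add_eq_zero, add_comm]; exact hode s hs.1
      show gradient F (x s) = -a s - α • v s
      rw [h]; abel
    rw [h1, intervalIntegral.integral_sub (f := fun s => -a s) (g := fun s => α • v s)
      hinta.neg (hintv.smul α),
      intervalIntegral.integral_neg, intervalIntegral.integral_smul, hFTC]
  -- bound on ‖v K₀‖
  have hvK₀sq : Tmax / 2 * ‖v K₀‖ ^ 2 ≤ B ^ 2 / Tmax := by
    have hint1 : IntervalIntegrable (fun t => ‖v t‖ ^ 2) MeasureTheory.volume 0 (Tmax/2) := by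
      apply ContinuousOn.intervalIntegrable
      rw [Set.uIcc_of_le (by linarith)]
      exact ((hvcon le_rfl).norm.pow 2)
    have hint2 : IntervalIntegrable (fun t => ‖v t‖ ^ 2) MeasureTheory.volume (Tmax/2) Tmax := by
      apply ContinuousOn.intervalIntegrable
      rw [Set.uIcc_of_le (by linarith)]
      exact ((hvcon (by linarith)).norm.pow 2)
    have hsplit : (∫ t in (0:ℝ)..(Tmax/2), ‖v t‖ ^ 2) + ∫ t in (Tmax/2)..Tmax, ‖v t‖ ^ 2
        = ∫ t in (0:ℝ)..Tmax, ‖v t‖ ^ 2 :=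
      intervalIntegral.integral_add_adjacent_intervals hint1 hint2
    have h1 : (0:ℝ) ≤ ∫ t in (0:ℝ)..(Tmax/2), ‖v t‖ ^ 2 :=
      intervalIntegral.integral_nonneg (by linarith) (fun u _ => by positivity)
    have hmono : (∫ t in (Tmax/2)..Tmax, (‖v K₀‖ ^ 2 : ℝ)) ≤
        ∫ t in (Tmax/2)..Tmax, ‖v t‖ ^ 2 := by
      apply intervalIntegral.integral_mono_on (by linarith)
        (intervalIntegrable_const) hint2
      intro u hu
      exact pow_le_pow_left₀ (norm_nonneg _) (hK₀min u hu.1 hu.2) 2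
    rw [intervalIntegral.integral_const, smul_eq_mul] at hmono
    have hnr := hnorestart Tmax hTmax.le le_rfl
    have : Tmax * ((∫ t in (0:ℝ)..(Tmax/2), ‖v t‖ ^ 2) + ∫ t in (Tmax/2)..Tmax, ‖v t‖ ^ 2)
        ≤ B ^ 2 := by rw [hsplit]; exact hnr
    have h2 : Tmax * ((Tmax - Tmax/2) * ‖v K₀‖ ^ 2) ≤ B ^ 2 := by nlinarith
    rw [le_div_iff₀ hTmax]
    nlinarith
  have hvK₀ : ‖v K₀‖ ≤ Real.sqrt 2 * B / Tmax := by
    have hr : (Real.sqrt 2 * B / Tmax) ^ 2 = 2 * B ^ 2 / Tmax ^ 2 := by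
      rw [div_pow, mul_pow, Real.sq_sqrt (by norm_num)]
    apply le_of_pow_le_pow_left₀ (n := 2) (by norm_num) (by positivity)
    rw [hr]
    rw [le_div_iff₀ hTmax] at hvK₀sq
    rw [le_div_iff₀ (by positivity : (0:ℝ) < Tmax ^ 2)]
    nlinarith
  -- bound on ∫ ‖v‖
  have hintnv : IntervalIntegrable (fun t => ‖v t‖) MeasureTheory.volume 0 K₀ := by
    apply ContinuousOn.intervalIntegrable
    rw [Set.uIcc_of_le hK₀0]; exact (hvcon le_rfl).norm
  have hintnv2 : IntervalIntegrable (fun t => ‖v t‖ ^ 2) MeasureTheory.volume 0 K₀ := by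
    apply ContinuousOn.intervalIntegrable
    rw [Set.uIcc_of_le hK₀0]; exact (hvcon le_rfl).norm.pow 2
  have hIv2 : (∫ t in (0:ℝ)..K₀, ‖v t‖ ^ 2) ≤ B ^ 2 / K₀ := by
    have := hnorestart K₀ hK₀0 hK₀ub
    rw [le_div_iff₀ hK₀pos]; linarith [this]
  have hIv : (∫ t in (0:ℝ)..K₀, ‖v t‖) ≤ B := by
    refine le_of_forall_pos_le_add ?_
    intro ε hε
    set c : ℝ := (B + ε) / K₀ with hc
    have hcpos : 0 < c := div_pos (by linarith) hK₀pos
    have hpt : ∀ u ∈ Set.Icc (0:ℝ) K₀, ‖v u‖ ≤ c / 2 + ‖v u‖ ^ 2 / (2 * c) := by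
      intro u _
      rw [div_add_div _ _ (by norm_num) (by positivity), le_div_iff₀ (by positivity)]
      nlinarith [sq_nonneg (c - ‖v u‖)]
    have hintR : IntervalIntegrable (fun u => c / 2 + ‖v u‖ ^ 2 / (2 * c))
        MeasureTheory.volume 0 K₀ :=
      (intervalIntegrable_const).add (hintnv2.div_const _)
    have h1 : (∫ t in (0:ℝ)..K₀, ‖v t‖) ≤
        ∫ t in (0:ℝ)..K₀, (c / 2 + ‖v t‖ ^ 2 / (2 * c)) :=
      intervalIntegral.integral_mono_on hK₀0 hintnv hintR hpt
    have h2 : (∫ t in (0:ℝ)..K₀, (c / 2 + ‖v t‖ ^ 2 / (2 * c)))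
        = K₀ * (c / 2) + (∫ t in (0:ℝ)..K₀, ‖v t‖ ^ 2) / (2 * c) := by
      rw [intervalIntegral.integral_add (intervalIntegrable_const) (hintnv2.div_const _),
        intervalIntegral.integral_const, intervalIntegral.integral_div,
        smul_eq_mul, sub_zero]
    have h3 : K₀ * (c / 2) = (B + ε) / 2 := by
      rw [hc]; field_simp
    have h4 : (∫ t in (0:ℝ)..K₀, ‖v t‖ ^ 2) / (2 * c) ≤ (B + ε) / 2 := by
      rw [div_le_iff₀ (by positivity)]
      have : (B + ε) / 2 * (2 * c) = (B + ε) ^ 2 / K₀ := by rw [hc]; field_simp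
      rw [this]
      calc (∫ t in (0:ℝ)..K₀, ‖v t‖ ^ 2) ≤ B ^ 2 / K₀ := hIv2
        _ ≤ (B + ε) ^ 2 / K₀ := by
            apply (div_le_div_iff_of_pos_right hK₀pos).mpr
            nlinarith
    calc (∫ t in (0:ℝ)..K₀, ‖v t‖) ≤ K₀ * (c / 2) + (∫ t in (0:ℝ)..K₀, ‖v t‖ ^ 2) / (2 * c) := by
          rw [← h2]; exact h1
      _ ≤ (B + ε) / 2 + (B + ε) / 2 := by rw [h3]; exact add_le_add_right h4 _
      _ = B + ε := by ring
  -- combine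
  rw [hgr]
  rw [norm_smul, Real.norm_eq_abs, abs_of_pos (inv_pos.mpr hK₀pos)]
  have hnormI : ‖-(v K₀) - α • ∫ s in (0:ℝ)..K₀, v s‖ ≤ ‖v K₀‖ + α * B := by
    calc ‖-(v K₀) - α • ∫ s in (0:ℝ)..K₀, v s‖ ≤ ‖-(v K₀)‖ + ‖α • ∫ s in (0:ℝ)..K₀, v s‖ :=
          norm_sub_le _ _
      _ = ‖v K₀‖ + α * ‖∫ s in (0:ℝ)..K₀, v s‖ := by
          rw [norm_neg, norm_smul, Real.norm_eq_abs, abs_of_pos hα]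
      _ ≤ ‖v K₀‖ + α * B := by
          gcongr
          calc ‖∫ s in (0:ℝ)..K₀, v s‖ ≤ ∫ s in (0:ℝ)..K₀, ‖v s‖ :=
                intervalIntegral.norm_integral_le_integral_norm hK₀0
            _ ≤ B := hIv
  calc K₀⁻¹ * ‖-(v K₀) - α • ∫ s in (0:ℝ)..K₀, v s‖ ≤ K₀⁻¹ * (‖v K₀‖ + α * B) := by
        gcongr
    _ ≤ (Tmax/2)⁻¹ * (Real.sqrt 2 * B / Tmax + α * B) := by
        apply mul_le_mul
        · exact inv_anti₀ (by linarith) hK₀lb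
        · exact add_le_add_left hvK₀ _
        · positivity
        · positivity
    _ = 2 * Real.sqrt 2 * B / Tmax ^ 2 + 2 * α * B / Tmax := by
        field_simp
end

section
/- (Gradient of the trajectory average versus average gradient.) Let F : ℝ^d → ℝ be twice differentiable with ρ-Lipschitz Hessian, α > 0, T_max > 0, B ≥ 0, and let x : [0,∞) → ℝ^d be twice differentiable and solve the heavy-ball ODE ẍ_t + α·ẋ_t + ∇F(x_t) = 0 for all t ≥ 0, with ẋ_0 = 0. Assume that for every T ∈ [0, T_max], T·∫₀ᵀ ‖ẋ_t‖² dt ≤ B². Let K₀ ∈ [T_max/2, T_max] be a minimizer of t ↦ ‖ẋ_t‖ over [T_max/2, T_max], and let x̂ = (1/K₀)·∫₀^{K₀} x_t dt. Then ‖∇F(x̂) − (1/K₀)·∫₀^{K₀} ∇F(x_t) dt‖ ≤ ρ·B²/16. -/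
open MeasureTheory intervalIntegral Set Topology

lemma cs_integral (f : ℝ → ℝ) (a b : ℝ) (hab : a ≤ b)
    (hc : ContinuousOn f (Set.Icc a b)) :
    (∫ u in a..b, f u) ^ 2 ≤ (b - a) * ∫ u in a..b, (f u) ^ 2 := by
  have hci : ∀ r ∈ Icc a b, ContinuousOn f (uIcc a r) := fun r hr => by
    rw [uIcc_of_le hr.1]; exact hc.mono (Icc_subset_Icc_right hr.2)
  have hIf : ∀ r ∈ Icc a b, IntervalIntegrable f volume a r := fun r hr =>
    (hci r hr).intervalIntegrable
  have hIf2 : ∀ r ∈ Icc a b, IntervalIntegrable (fun u => (f u)^2) volume a r := fun r hr =>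
    ((hci r hr).pow 2).intervalIntegrable
  set φ : ℝ → ℝ := fun r => (r - a) * (∫ u in a..r, (f u)^2) - (∫ u in a..r, f u)^2 with hφ
  have hderiv : ∀ r ∈ Ioo a b, HasDerivAt φ
      ((∫ u in a..r, (f u)^2) + (r - a) * (f r)^2 - 2 * (∫ u in a..r, f u) * f r) r := by
    intro r hr
    have hrm : r ∈ Icc a b := ⟨hr.1.le, hr.2.le⟩
    have hca : ContinuousAt f r := hc.continuousAt (Icc_mem_nhds hr.1 hr.2)
    have hmeas : StronglyMeasurableAtFilter f (𝓝 r) volume :=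
      ContinuousOn.stronglyMeasurableAtFilter isOpen_Ioo
        (hc.mono Ioo_subset_Icc_self) r hr
    have hF : HasDerivAt (fun u => ∫ x in a..u, f x) (f r) r :=
      integral_hasDerivAt_right (hIf r hrm) hmeas hca
    have hG : HasDerivAt (fun u => ∫ x in a..u, (f x)^2) ((f r)^2) r :=
      integral_hasDerivAt_right (hIf2 r hrm)
        (ContinuousOn.stronglyMeasurableAtFilter isOpen_Ioo
          ((hc.mono Ioo_subset_Icc_self).pow 2) r hr) (hca.pow 2)
    have h1 : HasDerivAt (fun u : ℝ => u - a) 1 r := (hasDerivAt_id r).sub_const a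
    have := ((h1.mul hG).sub (hF.pow 2))
    refine this.congr_deriv ?_
    ring
  have hmono : MonotoneOn φ (Icc a b) := by
    apply monotoneOn_of_deriv_nonneg (convex_Icc a b)
    · have h1 : ContinuousOn (fun r => ∫ u in a..r, f u) (Icc a b) := by
        have := intervalIntegral.continuousOn_primitive_interval
          (f := f) (μ := volume) (a := a) (b := b) (by
            rw [uIcc_of_le hab]; exact hc.integrableOn_Icc)
        rwa [uIcc_of_le hab] at this
      have h2 : ContinuousOn (fun r => ∫ u in a..r, (f u)^2) (Icc a b) := by
        have := intervalIntegral.continuousOn_primitive_interval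
          (f := fun u => (f u)^2) (μ := volume) (a := a) (b := b) (by
            rw [uIcc_of_le hab]; exact (hc.pow 2).integrableOn_Icc)
        rwa [uIcc_of_le hab] at this
      exact ((continuousOn_id.sub continuousOn_const).mul h2).sub (h1.pow 2)
    · rw [interior_Icc]
      exact fun r hr => ((hderiv r hr).differentiableAt).differentiableWithinAt
    · rw [interior_Icc]
      intro r hr
      rw [(hderiv r hr).deriv]
      -- show 0 ≤ ∫ (f u - f r)^2 expansion
      have hexp : (∫ u in a..r, (f u)^2) + (r - a) * (f r)^2 - 2 * (∫ u in a..r, f u) * f r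
          = ∫ u in a..r, (f u - f r)^2 := by
        have hrm : r ∈ Icc a b := ⟨hr.1.le, hr.2.le⟩
        have e1 : ∀ u : ℝ, (f u - f r)^2 = (f u)^2 - (2 * f r) * f u + (f r)^2 := by
          intro u; ring
        rw [intervalIntegral.integral_congr (g := fun u => (f u)^2 - (2 * f r) * f u + (f r)^2)
          (fun u _ => e1 u)]
        rw [intervalIntegral.integral_add (((hIf2 r hrm)).sub ((hIf r hrm).const_mul _))
          intervalIntegrable_const,
          intervalIntegral.integral_sub (hIf2 r hrm) ((hIf r hrm).const_mul _),
          intervalIntegral.integral_const_mul, intervalIntegral.integral_const]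
        simp only [smul_eq_mul]
        ring
      rw [hexp]
      exact intervalIntegral.integral_nonneg hr.1.le (fun u _ => sq_nonneg _)
  have h0 : φ a ≤ φ b := hmono (left_mem_Icc.mpr hab) (right_mem_Icc.mpr hab) hab
  have : φ a = 0 := by simp [hφ]
  rw [this] at h0
  simpa [hφ, sub_nonneg] using h0


lemma taylor_grad {d : ℕ} (F : EuclideanSpace ℝ (Fin d) → ℝ) (ρ : ℝ) (hρ : 0 ≤ ρ)
    (hFd2 : Differentiable ℝ (gradient F))
    (hlip : ∀ a b : EuclideanSpace ℝ (Fin d),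
      ‖fderiv ℝ (gradient F) a - fderiv ℝ (gradient F) b‖ ≤ ρ * ‖a - b‖)
    (p q : EuclideanSpace ℝ (Fin d)) :
    ‖gradient F q - gradient F p - fderiv ℝ (gradient F) p (q - p)‖
      ≤ ρ / 2 * ‖q - p‖ ^ 2 := by
  set g := gradient F with hg
  set H := fderiv ℝ g with hH
  set w := q - p with hw
  -- continuity of H
  have hHcont : Continuous H := by
    have : LipschitzWith (Real.toNNReal ρ) H := by
      apply LipschitzWith.of_dist_le_mul
      intro x y
      rw [dist_eq_norm, dist_eq_norm]
      refine le_trans (hlip x y) ?_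
      gcongr
      exact Real.le_coe_toNNReal ρ
    exact this.continuous
  -- the curve
  have hγ : ∀ τ : ℝ, HasDerivAt (fun s : ℝ => p + s • w) w τ := by
    intro τ
    simpa using ((hasDerivAt_id τ).smul_const w).const_add p
  have hψ : ∀ τ : ℝ, HasDerivAt (fun s : ℝ => g (p + s • w) - s • (H p w))
      (H (p + τ • w) w - H p w) τ := by
    intro τ
    have h1 : HasDerivAt (fun s : ℝ => g (p + s • w)) (H (p + τ • w) w) τ :=
      ((hFd2 (p + τ • w)).hasFDerivAt.comp_hasDerivAt (l := g) τ (hγ τ))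
    have h2 : HasDerivAt (fun s : ℝ => s • (H p w)) (H p w) τ := by
      simpa using (hasDerivAt_id τ).smul_const (H p w)
    exact h1.sub h2
  have hcontD : Continuous fun τ : ℝ => H (p + τ • w) w - H p w := by
    have : Continuous fun τ : ℝ => H (p + τ • w) :=
      hHcont.comp (continuous_const.add (continuous_id.smul continuous_const))
    exact (this.clm_apply continuous_const).sub continuous_const
  have hint : IntervalIntegrable (fun τ : ℝ => H (p + τ • w) w - H p w) volume 0 1 :=
    hcontD.intervalIntegrable 0 1
  have hftc : (∫ τ in (0:ℝ)..1, (H (p + τ • w) w - H p w))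
      = (g (p + (1:ℝ) • w) - (1:ℝ) • (H p w)) - (g (p + (0:ℝ) • w) - (0:ℝ) • (H p w)) :=
    intervalIntegral.integral_eq_sub_of_hasDerivAt (fun τ _ => hψ τ) hint
  have heq : g q - g p - H p w = ∫ τ in (0:ℝ)..1, (H (p + τ • w) w - H p w) := by
    rw [hftc]
    have hq : p + w = q := by rw [hw]; abel
    simp only [one_smul, zero_smul, add_zero, sub_zero, hq]
    abel
  rw [heq]
  have hbound : ∀ τ ∈ Set.uIoc (0:ℝ) 1, ‖H (p + τ • w) w - H p w‖ ≤ (ρ * ‖w‖^2) * τ := by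
    intro τ hτ
    rw [Set.uIoc_of_le zero_le_one] at hτ
    have h1 : ‖H (p + τ • w) w - H p w‖ ≤ ‖H (p + τ • w) - H p‖ * ‖w‖ := by
      rw [← ContinuousLinearMap.sub_apply]
      exact ContinuousLinearMap.le_opNorm _ w
    have h2 : ‖H (p + τ • w) - H p‖ ≤ ρ * (τ * ‖w‖) := by
      have h3 := hlip (p + τ • w) p
      rw [add_sub_cancel_left, norm_smul, Real.norm_eq_abs, abs_of_nonneg hτ.1.le] at h3
      exact h3
    calc ‖H (p + τ • w) w - H p w‖ ≤ (ρ * (τ * ‖w‖)) * ‖w‖ := by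
          refine le_trans h1 ?_
          exact mul_le_mul_of_nonneg_right h2 (norm_nonneg _)
      _ = (ρ * ‖w‖^2) * τ := by ring
  have hI := intervalIntegral.norm_integral_le_abs_of_norm_le
    (f := fun τ : ℝ => H (p + τ • w) w - H p w) (g := fun τ => (ρ * ‖w‖^2) * τ)
    (μ := volume) (a := 0) (b := 1)
    (by rw [MeasureTheory.ae_restrict_iff' measurableSet_uIoc]
        exact Filter.Eventually.of_forall hbound)
    ((continuous_const.mul continuous_id).intervalIntegrable 0 1)
  have hval : (∫ τ in (0:ℝ)..1, (ρ * ‖w‖^2) * τ) = ρ / 2 * ‖w‖^2 := by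
    rw [intervalIntegral.integral_const_mul, integral_id]
    ring
  rw [hval, abs_of_nonneg (by positivity)] at hI
  exact hI
/-- Gradient of the trajectory average versus the average
gradient, along a heavy-ball trajectory without restart, for a function with
`ρ`-Lipschitz Hessian. -/
theorem heavy_ball_gradient_of_average_vs_average_gradient
    {d : ℕ} (hd : 1 ≤ d)
    (F : EuclideanSpace ℝ (Fin d) → ℝ) (ρ : ℝ)
    (hFd : Differentiable ℝ F) (hFd2 : Differentiable ℝ (gradient F))
    (hlipHess : ∀ a b : EuclideanSpace ℝ (Fin d),
      ‖fderiv ℝ (gradient F) a - fderiv ℝ (gradient F) b‖ ≤ ρ * ‖a - b‖)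
    (α Tmax B : ℝ) (hα : 0 < α) (hTmax : 0 < Tmax) (hB : 0 ≤ B)
    (x v a : ℝ → EuclideanSpace ℝ (Fin d))
    (hx : ∀ t : ℝ, 0 ≤ t → HasDerivAt x (v t) t)
    (hv : ∀ t : ℝ, 0 ≤ t → HasDerivAt v (a t) t)
    (hode : ∀ t : ℝ, 0 ≤ t → a t + α • v t + gradient F (x t) = 0)
    (hv0 : v 0 = 0)
    (hnorestart : ∀ T : ℝ, 0 ≤ T → T ≤ Tmax →
      T * ∫ t in (0 : ℝ)..T, ‖v t‖ ^ 2 ≤ B ^ 2)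
    (K₀ : ℝ) (hK₀lb : Tmax / 2 ≤ K₀) (hK₀ub : K₀ ≤ Tmax)
    (hK₀min : ∀ t : ℝ, Tmax / 2 ≤ t → t ≤ Tmax → ‖v K₀‖ ≤ ‖v t‖)
    (xhat : EuclideanSpace ℝ (Fin d))
    (hxhat : xhat = K₀⁻¹ • ∫ t in (0 : ℝ)..K₀, x t) :
    ‖gradient F xhat - K₀⁻¹ • ∫ t in (0 : ℝ)..K₀, gradient F (x t)‖ ≤
      ρ * B ^ 2 / 16 := by
  have hK : 0 < K₀ := lt_of_lt_of_le (by linarith) hK₀lb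
  -- ρ is nonnegative
  have hρ : 0 ≤ ρ := by
    have h := hlipHess (EuclideanSpace.single (⟨0, hd⟩ : Fin d) (1:ℝ)) 0
    have h2 : (0:ℝ) ≤ ρ * ‖EuclideanSpace.single (⟨0, hd⟩ : Fin d) (1:ℝ) - 0‖ :=
      le_trans (norm_nonneg _) h
    rw [sub_zero, EuclideanSpace.norm_single, norm_one, mul_one] at h2
    exact h2
  -- basic continuity
  have hxC : ContinuousOn x (Ici 0) := fun t ht => ((hx t ht).continuousAt).continuousWithinAt
  have hvC : ContinuousOn v (Ici 0) := fun t ht => ((hv t ht).continuousAt).continuousWithinAt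
  have hsub : ∀ s t : ℝ, 0 ≤ s → Icc s t ⊆ Ici (0:ℝ) := fun s t hs u hu => le_trans hs hu.1
  have hxCC : ∀ s t : ℝ, 0 ≤ s → ContinuousOn x (Icc s t) := fun s t hs =>
    hxC.mono (hsub s t hs)
  have hvCC : ∀ s t : ℝ, 0 ≤ s → ContinuousOn v (Icc s t) := fun s t hs =>
    hvC.mono (hsub s t hs)
  have hvsq : ∀ s t : ℝ, 0 ≤ s → s ≤ t →
      IntervalIntegrable (fun u => ‖v u‖ ^ 2) volume s t := by
    intro s t hs hst
    apply ContinuousOn.intervalIntegrable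
    rw [uIcc_of_le hst]
    exact ((hvCC s t hs).norm).pow 2
  -- FTC for x
  have hftc : ∀ s t : ℝ, 0 ≤ s → s ≤ t → x t - x s = ∫ u in s..t, v u := by
    intro s t hs hst
    refine (intervalIntegral.integral_eq_sub_of_hasDerivAt (fun u hu => ?_) ?_).symm
    · refine hx u ?_
      rw [uIcc_of_le hst] at hu
      exact le_trans hs hu.1
    · apply ContinuousOn.intervalIntegrable
      rw [uIcc_of_le hst]
      exact hvCC s t hs
  -- displacement bound
  have hdisp : ∀ s t : ℝ, 0 ≤ s → s ≤ t →
      ‖x t - x s‖ ^ 2 ≤ (t - s) * ∫ u in s..t, ‖v u‖ ^ 2 := by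
    intro s t hs hst
    have h1 : ‖x t - x s‖ ≤ ∫ u in s..t, ‖v u‖ := by
      rw [hftc s t hs hst]
      exact intervalIntegral.norm_integral_le_integral_norm hst
    have h2 := cs_integral (fun u => ‖v u‖) s t hst ((hvCC s t hs).norm)
    calc ‖x t - x s‖ ^ 2 ≤ (∫ u in s..t, ‖v u‖) ^ 2 :=
          pow_le_pow_left₀ (norm_nonneg _) h1 2
      _ ≤ (t - s) * ∫ u in s..t, ‖v u‖ ^ 2 := h2
  set m : ℝ := K₀ / 2 with hm
  have hm0 : (0:ℝ) ≤ m := by positivity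
  have hmK : m ≤ K₀ := by rw [hm]; linarith
  set c : EuclideanSpace ℝ (Fin d) := x m with hc
  set S1 : ℝ := ∫ u in (0:ℝ)..m, ‖v u‖ ^ 2 with hS1
  set S2 : ℝ := ∫ u in m..K₀, ‖v u‖ ^ 2 with hS2
  set S : ℝ := ∫ u in (0:ℝ)..K₀, ‖v u‖ ^ 2 with hSdef
  have hS : S = S1 + S2 :=
    (intervalIntegral.integral_add_adjacent_intervals (hvsq 0 m le_rfl hm0)
      (hvsq m K₀ hm0 hmK)).symm
  have hS0 : 0 ≤ S := intervalIntegral.integral_nonneg hK.le (fun u _ => sq_nonneg _)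
  -- pointwise bounds on ‖x t - c‖²
  have hhalf1 : ∀ t ∈ Icc (0:ℝ) m, ‖x t - c‖ ^ 2 ≤ (m - t) * S1 := by
    intro t ht
    have h1 : ‖x t - c‖ ^ 2 = ‖x m - x t‖ ^ 2 := by rw [hc, norm_sub_rev]
    have h2 := hdisp t m ht.1 ht.2
    have h3 : (∫ u in t..m, ‖v u‖ ^ 2) ≤ S1 := by
      have hsplit : S1 = (∫ u in (0:ℝ)..t, ‖v u‖ ^ 2) + ∫ u in t..m, ‖v u‖ ^ 2 :=
        (intervalIntegral.integral_add_adjacent_intervals (hvsq 0 t le_rfl ht.1)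
          (hvsq t m ht.1 ht.2)).symm
      have hnn : 0 ≤ ∫ u in (0:ℝ)..t, ‖v u‖ ^ 2 :=
        intervalIntegral.integral_nonneg ht.1 (fun u _ => sq_nonneg _)
      linarith
    calc ‖x t - c‖ ^ 2 = ‖x m - x t‖ ^ 2 := h1
      _ ≤ (m - t) * ∫ u in t..m, ‖v u‖ ^ 2 := h2
      _ ≤ (m - t) * S1 := by
          apply mul_le_mul_of_nonneg_left h3
          linarith [ht.2]
  have hhalf2 : ∀ t ∈ Icc m K₀, ‖x t - c‖ ^ 2 ≤ (t - m) * S2 := by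
    intro t ht
    have h2 := hdisp m t hm0 ht.1
    have h3 : (∫ u in m..t, ‖v u‖ ^ 2) ≤ S2 := by
      have hsplit : S2 = (∫ u in m..t, ‖v u‖ ^ 2) + ∫ u in t..K₀, ‖v u‖ ^ 2 :=
        (intervalIntegral.integral_add_adjacent_intervals (hvsq m t hm0 ht.1)
          (hvsq t K₀ (le_trans hm0 ht.1) ht.2)).symm
      have hnn : 0 ≤ ∫ u in t..K₀, ‖v u‖ ^ 2 :=
        intervalIntegral.integral_nonneg ht.2 (fun u _ => sq_nonneg _)
      linarith
    calc ‖x t - c‖ ^ 2 ≤ (t - m) * ∫ u in m..t, ‖v u‖ ^ 2 := h2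
      _ ≤ (t - m) * S2 := by
          apply mul_le_mul_of_nonneg_left h3
          linarith [ht.1]
  -- integrability of ‖x t - c‖²
  have hxcsqC : ∀ s t : ℝ, 0 ≤ s → ContinuousOn (fun u => ‖x u - c‖ ^ 2) (Icc s t) :=
    fun s t hs => (((hxCC s t hs).sub continuousOn_const).norm).pow 2
  have hxcsqI : ∀ s t : ℝ, 0 ≤ s → s ≤ t →
      IntervalIntegrable (fun u => ‖x u - c‖ ^ 2) volume s t := by
    intro s t hs hst
    apply ContinuousOn.intervalIntegrable
    rw [uIcc_of_le hst]
    exact hxcsqC s t hs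
  -- bound for I = ∫₀^{K₀} ‖x t - c‖²
  have hIbound : (∫ t in (0:ℝ)..K₀, ‖x t - c‖ ^ 2) ≤ K₀ ^ 2 / 8 * S := by
    have hIsplit : (∫ t in (0:ℝ)..K₀, ‖x t - c‖ ^ 2)
        = (∫ t in (0:ℝ)..m, ‖x t - c‖ ^ 2) + ∫ t in m..K₀, ‖x t - c‖ ^ 2 :=
      (intervalIntegral.integral_add_adjacent_intervals (hxcsqI 0 m le_rfl hm0)
        (hxcsqI m K₀ hm0 hmK)).symm
    have hlin1 : IntervalIntegrable (fun t => (m - t) * S1) volume 0 m :=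
      (((continuous_const.sub continuous_id).mul continuous_const).intervalIntegrable 0 m)
    have hlin2 : IntervalIntegrable (fun t => (t - m) * S2) volume m K₀ :=
      (((continuous_id.sub continuous_const).mul continuous_const).intervalIntegrable m K₀)
    have h1 : (∫ t in (0:ℝ)..m, ‖x t - c‖ ^ 2) ≤ ∫ t in (0:ℝ)..m, (m - t) * S1 :=
      intervalIntegral.integral_mono_on hm0 (hxcsqI 0 m le_rfl hm0) hlin1 hhalf1
    have h2 : (∫ t in m..K₀, ‖x t - c‖ ^ 2) ≤ ∫ t in m..K₀, (t - m) * S2 :=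
      intervalIntegral.integral_mono_on hmK (hxcsqI m K₀ hm0 hmK) hlin2 hhalf2
    have hval1 : (∫ t in (0:ℝ)..m, (m - t) * S1) = m ^ 2 / 2 * S1 := by
      rw [intervalIntegral.integral_mul_const,
        intervalIntegral.integral_sub intervalIntegrable_const intervalIntegral.intervalIntegrable_id,
        intervalIntegral.integral_const, integral_id]
      simp only [smul_eq_mul, sub_zero]
      ring
    have hval2 : (∫ t in m..K₀, (t - m) * S2) = m ^ 2 / 2 * S2 := by
      rw [intervalIntegral.integral_mul_const,
        intervalIntegral.integral_sub intervalIntegral.intervalIntegrable_id intervalIntegrable_const,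
        intervalIntegral.integral_const, integral_id]
      simp only [smul_eq_mul]
      rw [hm]
      ring
    have hm2 : m ^ 2 / 2 = K₀ ^ 2 / 8 := by rw [hm]; ring
    rw [hIsplit, hS]
    rw [hval1] at h1
    rw [hval2] at h2
    rw [hm2] at h1 h2
    linarith
  -- variance step: ∫ ‖x t - xhat‖² ≤ ∫ ‖x t - c‖²
  have hxK : (∫ t in (0:ℝ)..K₀, x t) = K₀ • xhat := by
    rw [hxhat, smul_smul, mul_inv_cancel₀ hK.ne', one_smul]
  have hxI : IntervalIntegrable x volume 0 K₀ := by
    apply ContinuousOn.intervalIntegrable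
    rw [uIcc_of_le hK.le]
    exact hxCC 0 K₀ le_rfl
  set y : EuclideanSpace ℝ (Fin d) := xhat - c with hy
  have hinner : (∫ t in (0:ℝ)..K₀, (inner ℝ (x t - c) y : ℝ)) = K₀ * ‖y‖ ^ 2 := by
    have hfi : IntegrableOn (fun t => x t - c) (Ioc 0 K₀) volume := by
      have h0 : IntegrableOn (fun t => x t - c) (Icc 0 K₀) volume :=
        ((hxCC 0 K₀ le_rfl).sub continuousOn_const).integrableOn_Icc
      exact h0.mono_set Ioc_subset_Icc_self
    have hcomm : ∀ t : ℝ, (inner ℝ (x t - c) y : ℝ) = (inner ℝ y (x t - c) : ℝ) := fun t =>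
      real_inner_comm _ _
    rw [intervalIntegral.integral_of_le hK.le]
    calc (∫ t in Ioc (0:ℝ) K₀, (inner ℝ (x t - c) y : ℝ))
        = ∫ t in Ioc (0:ℝ) K₀, (inner ℝ y (x t - c) : ℝ) := by
          exact integral_congr_ae (Filter.Eventually.of_forall (fun t => hcomm t))
      _ = (inner ℝ y (∫ t in Ioc (0:ℝ) K₀, (x t - c)) : ℝ) := integral_inner hfi y
      _ = K₀ * ‖y‖ ^ 2 := by
          have : (∫ t in Ioc (0:ℝ) K₀, (x t - c)) = K₀ • y := by
            rw [← intervalIntegral.integral_of_le hK.le,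
              intervalIntegral.integral_sub hxI intervalIntegrable_const,
              intervalIntegral.integral_const, hxK, hy, sub_zero, smul_sub]
          rw [this, real_inner_smul_right, real_inner_self_eq_norm_sq]
  have hvar : (∫ t in (0:ℝ)..K₀, ‖x t - xhat‖ ^ 2) ≤ ∫ t in (0:ℝ)..K₀, ‖x t - c‖ ^ 2 := by
    have hpt : ∀ t : ℝ, ‖x t - xhat‖ ^ 2
        = ‖x t - c‖ ^ 2 - 2 * (inner ℝ (x t - c) y : ℝ) + ‖y‖ ^ 2 := by
      intro t
      have : x t - xhat = (x t - c) - y := by rw [hy]; abel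
      rw [this, norm_sub_sq_real]
    have hinnerI : IntervalIntegrable (fun t => (inner ℝ (x t - c) y : ℝ)) volume 0 K₀ := by
      apply ContinuousOn.intervalIntegrable
      rw [uIcc_of_le hK.le]
      exact ((hxCC 0 K₀ le_rfl).sub continuousOn_const).inner continuousOn_const
    have heq : (∫ t in (0:ℝ)..K₀, ‖x t - xhat‖ ^ 2)
        = (∫ t in (0:ℝ)..K₀, ‖x t - c‖ ^ 2) - 2 * (K₀ * ‖y‖ ^ 2) + K₀ * ‖y‖ ^ 2 := by
      rw [intervalIntegral.integral_congr (g := fun t =>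
        ‖x t - c‖ ^ 2 - 2 * (inner ℝ (x t - c) y : ℝ) + ‖y‖ ^ 2) (fun t _ => hpt t)]
      rw [intervalIntegral.integral_add
          ((hxcsqI 0 K₀ le_rfl hK.le).sub (hinnerI.const_mul 2)) intervalIntegrable_const,
        intervalIntegral.integral_sub (hxcsqI 0 K₀ le_rfl hK.le) (hinnerI.const_mul 2),
        intervalIntegral.integral_const_mul, hinner, intervalIntegral.integral_const]
      simp only [smul_eq_mul, sub_zero]
    have hy2 : 0 ≤ K₀ * ‖y‖ ^ 2 := by positivity
    linarith
  -- final assembly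
  set g : EuclideanSpace ℝ (Fin d) → EuclideanSpace ℝ (Fin d) := gradient F with hg
  set H : EuclideanSpace ℝ (Fin d) →
      EuclideanSpace ℝ (Fin d) →L[ℝ] EuclideanSpace ℝ (Fin d) := fderiv ℝ g with hH
  have hgC : Continuous g := hFd2.continuous
  have hgxI : IntervalIntegrable (fun t => g (x t)) volume 0 K₀ := by
    apply ContinuousOn.intervalIntegrable
    rw [uIcc_of_le hK.le]
    exact hgC.comp_continuousOn (hxCC 0 K₀ le_rfl)
  have hxmxhatI : IntervalIntegrable (fun t => x t - xhat) volume 0 K₀ :=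
    hxI.sub intervalIntegrable_const
  have hHI : IntervalIntegrable (fun t => (H xhat) (x t - xhat)) volume 0 K₀ := by
    apply ContinuousOn.intervalIntegrable
    rw [uIcc_of_le hK.le]
    exact (H xhat).continuous.comp_continuousOn
      ((hxCC 0 K₀ le_rfl).sub continuousOn_const)
  have hHzero : (∫ t in (0:ℝ)..K₀, (H xhat) (x t - xhat)) = 0 := by
    rw [ContinuousLinearMap.intervalIntegral_comp_comm (H xhat) hxmxhatI]
    have : (∫ t in (0:ℝ)..K₀, (x t - xhat)) = 0 := by
      rw [intervalIntegral.integral_sub hxI intervalIntegrable_const,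
        intervalIntegral.integral_const, hxK, sub_zero, sub_self]
    rw [this, map_zero]
  set r : ℝ → EuclideanSpace ℝ (Fin d) :=
    fun t => g (x t) - g xhat - (H xhat) (x t - xhat) with hr
  have hrI : IntervalIntegrable r volume 0 K₀ :=
    (hgxI.sub intervalIntegrable_const).sub hHI
  have hkey : K₀ • (g xhat - K₀⁻¹ • ∫ t in (0:ℝ)..K₀, g (x t))
      = - ∫ t in (0:ℝ)..K₀, r t := by
    rw [hr]
    rw [intervalIntegral.integral_sub (hgxI.sub intervalIntegrable_const) hHI,
      intervalIntegral.integral_sub hgxI intervalIntegrable_const,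
      hHzero, intervalIntegral.integral_const, sub_zero, sub_zero, smul_sub,
      smul_smul, mul_inv_cancel₀ hK.ne', one_smul]
    abel
  have htaylor : ∀ t : ℝ, ‖r t‖ ≤ ρ / 2 * ‖x t - xhat‖ ^ 2 := by
    intro t
    have := taylor_grad F ρ hρ hFd2 hlipHess xhat (x t)
    exact this
  have hbndI : IntervalIntegrable (fun t => ρ / 2 * ‖x t - xhat‖ ^ 2) volume 0 K₀ := by
    apply ContinuousOn.intervalIntegrable
    rw [uIcc_of_le hK.le]
    exact continuousOn_const.mul ((((hxCC 0 K₀ le_rfl).sub continuousOn_const).norm).pow 2)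
  have hnorm : ‖∫ t in (0:ℝ)..K₀, r t‖ ≤ ρ / 2 * (∫ t in (0:ℝ)..K₀, ‖x t - xhat‖ ^ 2) := by
    have h1 := intervalIntegral.norm_integral_le_abs_of_norm_le
      (f := r) (g := fun t => ρ / 2 * ‖x t - xhat‖ ^ 2) (μ := volume) (a := 0) (b := K₀)
      (by
        rw [MeasureTheory.ae_restrict_iff' measurableSet_uIoc]
        exact Filter.Eventually.of_forall (fun t _ => htaylor t)) hbndI
    have h2 : (∫ t in (0:ℝ)..K₀, ρ / 2 * ‖x t - xhat‖ ^ 2)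
        = ρ / 2 * (∫ t in (0:ℝ)..K₀, ‖x t - xhat‖ ^ 2) :=
      intervalIntegral.integral_const_mul _ _
    have h3 : 0 ≤ ρ / 2 * (∫ t in (0:ℝ)..K₀, ‖x t - xhat‖ ^ 2) := by
      apply mul_nonneg (by positivity)
      exact intervalIntegral.integral_nonneg hK.le (fun u _ => sq_nonneg _)
    rw [h2, abs_of_nonneg h3] at h1
    exact h1
  -- conclude
  have hJI : (∫ t in (0:ℝ)..K₀, ‖x t - xhat‖ ^ 2) ≤ K₀ ^ 2 / 8 * S := le_trans hvar hIbound
  have hKS : K₀ * S ≤ B ^ 2 := hnorestart K₀ hK.le hK₀ub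
  have hfinal : K₀ * ‖g xhat - K₀⁻¹ • ∫ t in (0:ℝ)..K₀, g (x t)‖
      ≤ ρ / 2 * (K₀ ^ 2 / 8 * S) := by
    have h4 : ‖K₀ • (g xhat - K₀⁻¹ • ∫ t in (0:ℝ)..K₀, g (x t))‖
        = K₀ * ‖g xhat - K₀⁻¹ • ∫ t in (0:ℝ)..K₀, g (x t)‖ := by
      rw [norm_smul, Real.norm_eq_abs, abs_of_pos hK]
    rw [← h4, hkey, norm_neg]
    refine le_trans hnorm ?_
    exact mul_le_mul_of_nonneg_left hJI (by positivity)
  have e1 : ρ / 2 * (K₀ ^ 2 / 8 * S) = ρ / 16 * K₀ * (K₀ * S) := by ring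
  have e2 : ρ / 16 * K₀ * (K₀ * S) ≤ ρ / 16 * K₀ * B ^ 2 :=
    mul_le_mul_of_nonneg_left hKS (by positivity)
  have e3 : ρ / 16 * K₀ * B ^ 2 = K₀ * (ρ * B ^ 2 / 16) := by ring
  have h7 : K₀ * ‖g xhat - K₀⁻¹ • ∫ t in (0:ℝ)..K₀, g (x t)‖
      ≤ K₀ * (ρ * B ^ 2 / 16) := by linarith
  exact le_of_mul_le_mul_left h7 hK
end

section
/- (Small gradient norm of the output of a non-restarted epoch of continuous RISP.) Let F : ℝ^d → ℝ be twice differentiable with ρ-Lipschitz Hessian (ρ > 0), let ε > 0, and set α = (ε·ρ)^{1/4}, T_max = (ε·ρ)^{−1/4}, B = √(ε/ρ). Let x : [0,∞) → ℝ^d be twice differentiable and solve the heavy-ball ODE ẍ_t + α·ẋ_t + ∇F(x_t) = 0 for all t ≥ 0, with ẋ_0 = 0, and assume that for every T ∈ [0, T_max], T·∫₀ᵀ ‖ẋ_t‖² dt ≤ B². Let K₀ ∈ [T_max/2, T_max] be a minimizer of t ↦ ‖ẋ_t‖ over [T_max/2, T_max], and let x̂ = (1/K₀)·∫₀^{K₀}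 x_t dt. Then ‖∇F(x̂)‖ ≤ 5·ε. -/
open intervalIntegral MeasureTheory

open intervalIntegral MeasureTheory

/-- Cauchy–Schwarz for interval integrals. -/
lemma cs_integral_s17 (f : ℝ → ℝ) (a b : ℝ) (hab : a ≤ b)
    (hf : IntervalIntegrable f volume a b)
    (hf2 : IntervalIntegrable (fun t => f t ^ 2) volume a b) :
    (∫ t in a..b, f t) ^ 2 ≤ (b - a) * ∫ t in a..b, f t ^ 2 := by
  rcases eq_or_lt_of_le hab with rfl | hab'
  · simp
  set c : ℝ := (∫ t in a..b, f t) / (b - a) with hc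
  have h0 : 0 ≤ ∫ t in a..b, (f t - c) ^ 2 :=
    intervalIntegral.integral_nonneg hab fun t _ => sq_nonneg _
  have hexp : ∫ t in a..b, (f t - c) ^ 2
      = (∫ t in a..b, f t ^ 2) - 2 * c * (∫ t in a..b, f t) + c ^ 2 * (b - a) := by
    have : (fun t => (f t - c) ^ 2) = fun t => (f t ^ 2 - 2 * c * f t) + c ^ 2 := by
      funext t; ring
    rw [this, intervalIntegral.integral_add (hf2.sub (hf.const_mul _)) intervalIntegrable_const,
      intervalIntegral.integral_sub hf2 (hf.const_mul _),
      intervalIntegral.integral_const_mul, intervalIntegral.integral_const, smul_eq_mul]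
    ring
  rw [hexp] at h0
  have hb : 0 < b - a := by linarith
  set P := ∫ t in a..b, f t
  set Q := ∫ t in a..b, f t ^ 2
  rw [hc] at h0
  have h1 : 0 ≤ Q * (b - a) - P ^ 2 := by
    have h2 := mul_le_mul_of_nonneg_left h0 hb.le
    have key : (b - a) * (Q - 2 * (P / (b - a)) * P + (P / (b - a)) ^ 2 * (b - a))
        = Q * (b - a) - P ^ 2 := by field_simp; ring
    rw [key] at h2; linarith
  nlinarith [h1]

open intervalIntegral MeasureTheory

/-- Quadratic Taylor bound for a differentiable map with Lipschitz derivative. -/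
lemma taylor_quad {E F : Type*} [NormedAddCommGroup E] [NormedSpace ℝ E]
    [NormedAddCommGroup F] [NormedSpace ℝ F] [CompleteSpace F]
    (f : E → F) (hf : Differentiable ℝ f) (ρ : ℝ) (hρ : 0 ≤ ρ)
    (hlip : ∀ a b : E, ‖fderiv ℝ f a - fderiv ℝ f b‖ ≤ ρ * ‖a - b‖)
    (z y : E) : ‖f y - f z - fderiv ℝ f z (y - z)‖ ≤ ρ / 2 * ‖y - z‖ ^ 2 := by
  set L := fderiv ℝ f z
  set g : ℝ → F := fun t => f (z + t • (y - z)) - t • L (y - z) with hg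
  have hfc : Continuous (fderiv ℝ f) := by
    have : LipschitzWith ρ.toNNReal (fderiv ℝ f) := by
      apply LipschitzWith.of_dist_le_mul
      intro a b
      rw [dist_eq_norm, dist_eq_norm, Real.coe_toNNReal _ hρ]
      exact hlip a b
    exact this.continuous
  have hderiv : ∀ t : ℝ, HasDerivAt g
      ((fderiv ℝ f (z + t • (y - z)) - L) (y - z)) t := by
    intro t
    have h1 : HasDerivAt (fun t : ℝ => z + t • (y - z)) (y - z) t := by
      simpa using ((hasDerivAt_id t).smul_const (y - z)).const_add z
    have h2 : HasDerivAt (fun t : ℝ => f (z + t • (y - z)))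
        (fderiv ℝ f (z + t • (y - z)) (y - z)) t :=
      (hf (z + t • (y - z))).hasFDerivAt.comp_hasDerivAt t h1
    have h3 : HasDerivAt (fun t : ℝ => t • L (y - z)) (L (y - z)) t := by
      simpa using (hasDerivAt_id t).smul_const (L (y - z))
    exact h2.sub h3
  have hcont : Continuous fun t : ℝ => (fderiv ℝ f (z + t • (y - z)) - L) (y - z) := by
    have hc1 : Continuous fun t : ℝ => z + t • (y - z) := by continuity
    exact ((ContinuousLinearMap.apply ℝ F (y - z)).continuous.comp
      ((hfc.comp hc1).sub continuous_const))
  have hint : IntervalIntegrable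
      (fun t : ℝ => (fderiv ℝ f (z + t • (y - z)) - L) (y - z)) volume 0 1 :=
    hcont.intervalIntegrable 0 1
  have hftc : ∫ t in (0:ℝ)..1, (fderiv ℝ f (z + t • (y - z)) - L) (y - z)
      = g 1 - g 0 :=
    intervalIntegral.integral_eq_sub_of_hasDerivAt (fun t _ => hderiv t) hint
  have hg1 : g 1 - g 0 = f y - f z - L (y - z) := by
    simp [hg]; abel
  have hbound : ∀ t ∈ Set.Icc (0:ℝ) 1,
      ‖(fderiv ℝ f (z + t • (y - z)) - L) (y - z)‖ ≤ ρ * ‖y - z‖ ^ 2 * t := by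
    intro t ht
    calc ‖(fderiv ℝ f (z + t • (y - z)) - L) (y - z)‖
        ≤ ‖fderiv ℝ f (z + t • (y - z)) - L‖ * ‖y - z‖ :=
          ContinuousLinearMap.le_opNorm _ _
      _ ≤ ρ * ‖z + t • (y - z) - z‖ * ‖y - z‖ := by
          gcongr; exact hlip _ _
      _ = ρ * ‖y - z‖ ^ 2 * t := by
          rw [add_sub_cancel_left, norm_smul, Real.norm_eq_abs, abs_of_nonneg ht.1]
          ring
  calc ‖f y - f z - L (y - z)‖
      = ‖∫ t in (0:ℝ)..1, (fderiv ℝ f (z + t • (y - z)) - L) (y - z)‖ := by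
        rw [hftc, hg1]
    _ ≤ ∫ t in (0:ℝ)..1, ‖(fderiv ℝ f (z + t • (y - z)) - L) (y - z)‖ :=
        intervalIntegral.norm_integral_le_integral_norm zero_le_one
    _ ≤ ∫ t in (0:ℝ)..1, ρ * ‖y - z‖ ^ 2 * t := by
        apply intervalIntegral.integral_mono_on zero_le_one (hcont.norm.intervalIntegrable 0 1)
          (by apply Continuous.intervalIntegrable; continuity)
        exact hbound
    _ = ρ / 2 * ‖y - z‖ ^ 2 := by
        rw [intervalIntegral.integral_const_mul, integral_id]
        ring

open intervalIntegral MeasureTheory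

lemma integral_abs_sub (K t : ℝ) (ht0 : 0 ≤ t) (htK : t ≤ K) :
    ∫ s in (0:ℝ)..K, |s - t| = (t ^ 2 + (K - t) ^ 2) / 2 := by
  have hint : ∀ u w : ℝ, IntervalIntegrable (fun s => |s - t|) volume u w := fun u w =>
    (continuous_abs.comp (continuous_id.sub continuous_const)).intervalIntegrable u w
  rw [← intervalIntegral.integral_add_adjacent_intervals (hint 0 t) (hint t K)]
  have h1 : ∫ s in (0:ℝ)..t, |s - t| = t ^ 2 / 2 := by
    rw [intervalIntegral.integral_congr (g := fun s => t - s) ?_]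
    · rw [intervalIntegral.integral_sub (intervalIntegrable_const) intervalIntegrable_id,
        intervalIntegral.integral_const, integral_id, smul_eq_mul]
      ring
    · intro s hs
      rw [Set.uIcc_of_le ht0] at hs
      simp only
      rw [abs_of_nonpos (by linarith [hs.2])]
      ring
  have h2 : ∫ s in t..K, |s - t| = (K - t) ^ 2 / 2 := by
    rw [intervalIntegral.integral_congr (g := fun s => s - t) ?_]
    · rw [intervalIntegral.integral_sub intervalIntegrable_id (intervalIntegrable_const),
        intervalIntegral.integral_const, integral_id, smul_eq_mul]
      ring
    · intro s hs
      rw [Set.uIcc_of_le htK] at hs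
      simp only
      rw [abs_of_nonneg (by linarith [hs.1])]
  rw [h1, h2]; ring

set_option maxHeartbeats 1000000 in
/-- Small gradient norm of the output of a non-restarted epoch
of continuous RISP. -/
theorem continuous_risp_no_restart_small_gradient
    {d : ℕ} (hd : 1 ≤ d)
    (F : EuclideanSpace ℝ (Fin d) → ℝ) (ρ : ℝ) (hρ : 0 < ρ)
    (hFd : Differentiable ℝ F) (hFd2 : Differentiable ℝ (gradient F))
    (hlipHess : ∀ a b : EuclideanSpace ℝ (Fin d),
      ‖fderiv ℝ (gradient F) a - fderiv ℝ (gradient F) b‖ ≤ ρ * ‖a - b‖)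
    (ε : ℝ) (hε : 0 < ε)
    (α Tmax B : ℝ)
    (hα : α = (ε * ρ) ^ ((1 : ℝ) / 4))
    (hTmax : Tmax = (ε * ρ) ^ (-(1 : ℝ) / 4))
    (hB : B = Real.sqrt (ε / ρ))
    (x v a : ℝ → EuclideanSpace ℝ (Fin d))
    (hx : ∀ t : ℝ, 0 ≤ t → HasDerivAt x (v t) t)
    (hv : ∀ t : ℝ, 0 ≤ t → HasDerivAt v (a t) t)
    (hode : ∀ t : ℝ, 0 ≤ t → a t + α • v t + gradient F (x t) = 0)
    (hv0 : v 0 = 0)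
    (hnorestart : ∀ T : ℝ, 0 ≤ T → T ≤ Tmax →
      T * ∫ t in (0 : ℝ)..T, ‖v t‖ ^ 2 ≤ B ^ 2)
    (K₀ : ℝ) (hK₀lb : Tmax / 2 ≤ K₀) (hK₀ub : K₀ ≤ Tmax)
    (hK₀min : ∀ t : ℝ, Tmax / 2 ≤ t → t ≤ Tmax → ‖v K₀‖ ≤ ‖v t‖)
    (xhat : EuclideanSpace ℝ (Fin d))
    (hxhat : xhat = K₀⁻¹ • ∫ t in (0 : ℝ)..K₀, x t) :
    ‖gradient F xhat‖ ≤ 5 * ε := by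
  -- basic positivity and algebraic identities
  have hc : 0 < ε * ρ := mul_pos hε hρ
  have hα0 : 0 < α := hα ▸ Real.rpow_pos_of_pos hc _
  have hT0 : 0 < Tmax := hTmax ▸ Real.rpow_pos_of_pos hc _
  have hK0 : 0 < K₀ := lt_of_lt_of_le (by linarith) hK₀lb
  have hB0 : 0 ≤ B := hB ▸ Real.sqrt_nonneg _
  have hαT : α * Tmax = 1 := by
    rw [hα, hTmax, ← Real.rpow_add hc]; norm_num
  have hα2B : α ^ 2 * B = ε := by
    rw [hα, hB]
    have h1 : ((ε * ρ) ^ ((1:ℝ)/4)) ^ (2:ℕ) = (ε * ρ) ^ ((1:ℝ)/2) := by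
      rw [← Real.rpow_natCast ((ε * ρ) ^ ((1:ℝ)/4)) 2, ← Real.rpow_mul hc.le]; norm_num
    rw [h1, ← Real.sqrt_eq_rpow, ← Real.sqrt_mul hc.le,
      (show ε * ρ * (ε / ρ) = ε ^ 2 by field_simp), Real.sqrt_sq hε.le]
  have hB2 : B ^ 2 = ε / ρ := by
    rw [hB, Real.sq_sqrt (by positivity)]
  -- continuity
  have hxC : ContinuousOn x (Set.Ici 0) := fun t ht => ((hx t ht).continuousAt).continuousWithinAt
  have hvC : ContinuousOn v (Set.Ici 0) := fun t ht => ((hv t ht).continuousAt).continuousWithinAt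
  have hgC : Continuous (gradient F) := hFd2.continuous
  have hsub : ∀ u w : ℝ, 0 ≤ u → 0 ≤ w → Set.uIcc u w ⊆ Set.Ici 0 :=
    fun u w hu hw z hz => le_trans (le_inf hu hw) hz.1
  have hvInt : ∀ u w, 0 ≤ u → 0 ≤ w → IntervalIntegrable v volume u w :=
    fun u w hu hw => (hvC.mono (hsub u w hu hw)).intervalIntegrable
  have hxInt : ∀ u w, 0 ≤ u → 0 ≤ w → IntervalIntegrable x volume u w :=
    fun u w hu hw => (hxC.mono (hsub u w hu hw)).intervalIntegrable
  have hnvInt : ∀ u w, 0 ≤ u → 0 ≤ w → IntervalIntegrable (fun t => ‖v t‖) volume u w :=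
    fun u w hu hw => ((hvC.mono (hsub u w hu hw)).norm).intervalIntegrable
  have hnv2Int : ∀ u w, 0 ≤ u → 0 ≤ w →
      IntervalIntegrable (fun t => ‖v t‖ ^ 2) volume u w :=
    fun u w hu hw => (((hvC.mono (hsub u w hu hw)).norm).pow 2).intervalIntegrable
  have hgxInt : ∀ u w, 0 ≤ u → 0 ≤ w →
      IntervalIntegrable (fun t => gradient F (x t)) volume u w :=
    fun u w hu hw => (hgC.comp_continuousOn (hxC.mono (hsub u w hu hw))).intervalIntegrable
  -- FTC for x
  have hftcx : ∀ s t : ℝ, 0 ≤ s → 0 ≤ t → x t - x s = ∫ u in s..t, v u := by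
    intro s t hs ht
    exact (intervalIntegral.integral_eq_sub_of_hasDerivAt
      (fun u hu => hx u (hsub s t hs ht hu)) (hvInt s t hs ht)).symm
  -- the ODE written as a formula for the acceleration
  have ha : ∀ t : ℝ, 0 ≤ t → a t = -(α • v t) - gradient F (x t) := by
    intro t ht
    have h := hode t ht
    rw [add_assoc, add_eq_zero_iff_eq_neg] at h
    rw [h]; abel
  -- FTC for v
  have hftcv : ∫ t in (0:ℝ)..K₀, (-(α • v t) - gradient F (x t)) = v K₀ - v 0 := by
    apply intervalIntegral.integral_eq_sub_of_hasDerivAt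
    · intro t ht
      have ht0 : 0 ≤ t := hsub 0 K₀ le_rfl hK0.le ht
      have := hv t ht0
      rwa [ha t ht0] at this
    · exact (((hvC.mono (hsub 0 K₀ le_rfl hK0.le)).const_smul α).neg.sub
        (hgC.comp_continuousOn (hxC.mono (hsub 0 K₀ le_rfl hK0.le)))).intervalIntegrable
  set V := ∫ t in (0:ℝ)..K₀, v t with hV
  have hG : ∫ t in (0:ℝ)..K₀, gradient F (x t) = -(α • V) - v K₀ := by
    have hint1 : IntervalIntegrable (fun t => -(α • v t)) volume 0 K₀ := by
      apply ContinuousOn.intervalIntegrable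
      exact ((hvC.mono (hsub 0 K₀ le_rfl hK0.le)).const_smul α).neg
    have h1 : ∫ t in (0:ℝ)..K₀, (-(α • v t) - gradient F (x t))
        = -(α • V) - ∫ t in (0:ℝ)..K₀, gradient F (x t) := by
      rw [intervalIntegral.integral_sub hint1 (hgxInt 0 K₀ le_rfl hK0.le),
        intervalIntegral.integral_neg, intervalIntegral.integral_smul]
    rw [h1, hv0, sub_zero] at hftcv
    rw [← hftcv]; abel
  -- kinetic energy bounds
  set I := ∫ t in (0:ℝ)..K₀, ‖v t‖ ^ 2 with hIdef
  have hIK : K₀ * I ≤ B ^ 2 := hnorestart K₀ hK0.le hK₀ub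
  have hI0 : 0 ≤ I := intervalIntegral.integral_nonneg hK0.le (fun t _ => sq_nonneg _)
  -- bound on ‖v K₀‖
  have hvK : ‖v K₀‖ ≤ Real.sqrt 2 * (B / Tmax) := by
    have hIT : Tmax * ∫ t in (0:ℝ)..Tmax, ‖v t‖ ^ 2 ≤ B ^ 2 :=
      hnorestart Tmax hT0.le le_rfl
    have hsplit : (∫ t in (0:ℝ)..(Tmax/2), ‖v t‖ ^ 2) + ∫ t in (Tmax/2)..Tmax, ‖v t‖ ^ 2
        = ∫ t in (0:ℝ)..Tmax, ‖v t‖ ^ 2 :=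
      intervalIntegral.integral_add_adjacent_intervals
        (hnv2Int 0 (Tmax/2) le_rfl (by linarith)) (hnv2Int (Tmax/2) Tmax (by linarith) hT0.le)
    have h1 : (0:ℝ) ≤ ∫ t in (0:ℝ)..(Tmax/2), ‖v t‖ ^ 2 :=
      intervalIntegral.integral_nonneg (by linarith) (fun t _ => sq_nonneg _)
    have h2 : (Tmax - Tmax/2) * ‖v K₀‖ ^ 2 ≤ ∫ t in (Tmax/2)..Tmax, ‖v t‖ ^ 2 := by
      have hconst : ∫ _ in (Tmax/2)..Tmax, ‖v K₀‖ ^ 2 = (Tmax - Tmax/2) • ‖v K₀‖ ^ 2 :=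
        intervalIntegral.integral_const _
      rw [smul_eq_mul] at hconst
      rw [← hconst]
      apply intervalIntegral.integral_mono_on (by linarith) intervalIntegrable_const
        (hnv2Int (Tmax/2) Tmax (by linarith) hT0.le)
      intro t ht
      exact pow_le_pow_left₀ (norm_nonneg _) (hK₀min t ht.1 ht.2) 2
    have hsq : ‖v K₀‖ ^ 2 ≤ (Real.sqrt 2 * (B / Tmax)) ^ 2 := by
      have hrhs : (Real.sqrt 2 * (B / Tmax)) ^ 2 = 2 * B ^ 2 / Tmax ^ 2 := by
        rw [mul_pow, Real.sq_sqrt (by norm_num : (0:ℝ) ≤ 2)]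
        field_simp
      rw [hrhs, le_div_iff₀ (by positivity)]
      nlinarith [mul_le_mul_of_nonneg_left h2 hT0.le, hIT, hsplit, h1,
        mul_pos hT0 hT0]
    exact (pow_le_pow_iff_left₀ (norm_nonneg (v K₀))
      (by positivity : (0:ℝ) ≤ Real.sqrt 2 * (B / Tmax)) two_ne_zero).mp hsq
  -- bound on the integral of the speed
  have hnv0 : 0 ≤ ∫ t in (0:ℝ)..K₀, ‖v t‖ :=
    intervalIntegral.integral_nonneg hK0.le (fun t _ => norm_nonneg _)
  have hnvB : ∫ t in (0:ℝ)..K₀, ‖v t‖ ≤ B := by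
    have hcs := cs_integral_s17 (fun t => ‖v t‖) 0 K₀ hK0.le
      (hnvInt 0 K₀ le_rfl hK0.le) (hnv2Int 0 K₀ le_rfl hK0.le)
    rw [sub_zero] at hcs
    have : (∫ t in (0:ℝ)..K₀, ‖v t‖) ^ 2 ≤ B ^ 2 := le_trans hcs hIK
    exact (pow_le_pow_iff_left₀ hnv0 hB0 two_ne_zero).mp this
  have hVB : ‖V‖ ≤ B :=
    le_trans (intervalIntegral.norm_integral_le_integral_norm hK0.le) hnvB
  -- displacement bound
  have hmono2 : ∀ s t : ℝ, 0 ≤ t → t ≤ s → s ≤ K₀ → (∫ u in t..s, ‖v u‖ ^ 2) ≤ I := by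
    intro s t ht hts hsK
    have e1 : (∫ u in (0:ℝ)..t, ‖v u‖ ^ 2) + ∫ u in t..s, ‖v u‖ ^ 2
        = ∫ u in (0:ℝ)..s, ‖v u‖ ^ 2 :=
      intervalIntegral.integral_add_adjacent_intervals (hnv2Int 0 t le_rfl ht)
        (hnv2Int t s ht (le_trans ht hts))
    have e2 : (∫ u in (0:ℝ)..s, ‖v u‖ ^ 2) + ∫ u in s..K₀, ‖v u‖ ^ 2 = I :=
      intervalIntegral.integral_add_adjacent_intervals (hnv2Int 0 s le_rfl (le_trans ht hts))
        (hnv2Int s K₀ (le_trans ht hts) hK0.le)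
    have p1 : (0:ℝ) ≤ ∫ u in (0:ℝ)..t, ‖v u‖ ^ 2 :=
      intervalIntegral.integral_nonneg ht (fun u _ => sq_nonneg _)
    have p2 : (0:ℝ) ≤ ∫ u in s..K₀, ‖v u‖ ^ 2 :=
      intervalIntegral.integral_nonneg hsK (fun u _ => sq_nonneg _)
    linarith
  have hdisp : ∀ s t : ℝ, s ∈ Set.Icc (0:ℝ) K₀ → t ∈ Set.Icc (0:ℝ) K₀ →
      ‖x s - x t‖ ^ 2 ≤ |s - t| * I := by
    have key : ∀ s t : ℝ, 0 ≤ t → t ≤ s → s ≤ K₀ → ‖x s - x t‖ ^ 2 ≤ (s - t) * I := by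
      intro s t ht hts hsK
      have hs0 : 0 ≤ s := le_trans ht hts
      have h1 : ‖x s - x t‖ ≤ ∫ u in t..s, ‖v u‖ := by
        rw [hftcx t s ht hs0]
        calc ‖∫ u in t..s, v u‖ ≤ |∫ u in t..s, ‖v u‖| :=
              intervalIntegral.norm_integral_le_abs_integral_norm
          _ = ∫ u in t..s, ‖v u‖ := abs_of_nonneg
              (intervalIntegral.integral_nonneg hts (fun u _ => norm_nonneg _))
      have h2 : (∫ u in t..s, ‖v u‖) ^ 2 ≤ (s - t) * ∫ u in t..s, ‖v u‖ ^ 2 :=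
        cs_integral_s17 _ t s hts (hnvInt t s ht hs0) (hnv2Int t s ht hs0)
      have h3 := hmono2 s t ht hts hsK
      have h4 : ‖x s - x t‖ ^ 2 ≤ (∫ u in t..s, ‖v u‖) ^ 2 :=
        pow_le_pow_left₀ (norm_nonneg _) h1 2
      nlinarith
    intro s t hs ht
    rcases le_total t s with h | h
    · rw [abs_of_nonneg (by linarith)]
      exact key s t ht.1 h hs.2
    · rw [abs_of_nonpos (by linarith)]
      have := key t s hs.1 h ht.2
      rw [norm_sub_rev]
      calc ‖x t - x s‖ ^ 2 ≤ (t - s) * I := this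
        _ = -(s - t) * I := by ring
  -- distance from the average point
  have hxhat_dist : ∀ t ∈ Set.Icc (0:ℝ) K₀,
      ‖xhat - x t‖ ^ 2 ≤ I / K₀ * ((t ^ 2 + (K₀ - t) ^ 2) / 2) := by
    intro t ht
    have hxK := hxC.mono (hsub 0 K₀ le_rfl hK0.le)
    have e1 : ∫ s in (0:ℝ)..K₀, (x s - x t) = (∫ s in (0:ℝ)..K₀, x s) - K₀ • x t := by
      rw [intervalIntegral.integral_sub (hxInt 0 K₀ le_rfl hK0.le) intervalIntegrable_const,
        intervalIntegral.integral_const, sub_zero]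
    have e2 : xhat - x t = K₀⁻¹ • ∫ s in (0:ℝ)..K₀, (x s - x t) := by
      rw [e1, smul_sub, ← hxhat, smul_smul, inv_mul_cancel₀ hK0.ne', one_smul]
    have e3 : ‖xhat - x t‖ ≤ K₀⁻¹ * ∫ s in (0:ℝ)..K₀, ‖x s - x t‖ := by
      rw [e2, norm_smul, Real.norm_eq_abs, abs_of_nonneg (inv_nonneg.mpr hK0.le)]
      exact mul_le_mul_of_nonneg_left
        (intervalIntegral.norm_integral_le_integral_norm hK0.le) (by positivity)
    have hnxInt : IntervalIntegrable (fun s => ‖x s - x t‖) volume 0 K₀ := by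
      apply ContinuousOn.intervalIntegrable
      exact (hxK.sub continuousOn_const).norm
    have hnx2Int : IntervalIntegrable (fun s => ‖x s - x t‖ ^ 2) volume 0 K₀ := by
      apply ContinuousOn.intervalIntegrable
      exact ((hxK.sub continuousOn_const).norm).pow 2
    have e4 : (∫ s in (0:ℝ)..K₀, ‖x s - x t‖) ^ 2
        ≤ K₀ * ∫ s in (0:ℝ)..K₀, ‖x s - x t‖ ^ 2 := by
      have := cs_integral_s17 (fun s => ‖x s - x t‖) 0 K₀ hK0.le hnxInt hnx2Int
      rwa [sub_zero] at this
    have e5 : ∫ s in (0:ℝ)..K₀, ‖x s - x t‖ ^ 2 ≤ ∫ s in (0:ℝ)..K₀, I * |s - t| := by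
      apply intervalIntegral.integral_mono_on hK0.le hnx2Int
      · exact (continuous_const.mul
          ((continuous_id.sub continuous_const).abs)).intervalIntegrable 0 K₀
      · intro s hs
        rw [mul_comm]
        exact hdisp s t hs ht
    have e6 : ∫ s in (0:ℝ)..K₀, I * |s - t| = I * ((t ^ 2 + (K₀ - t) ^ 2) / 2) := by
      rw [intervalIntegral.integral_const_mul, integral_abs_sub K₀ t ht.1 ht.2]
    calc ‖xhat - x t‖ ^ 2
        ≤ (K₀⁻¹ * ∫ s in (0:ℝ)..K₀, ‖x s - x t‖) ^ 2 :=
          pow_le_pow_left₀ (norm_nonneg _) e3 2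
      _ = K₀⁻¹ ^ 2 * (∫ s in (0:ℝ)..K₀, ‖x s - x t‖) ^ 2 := by ring
      _ ≤ K₀⁻¹ ^ 2 * (K₀ * (I * ((t ^ 2 + (K₀ - t) ^ 2) / 2))) := by
          apply mul_le_mul_of_nonneg_left _ (by positivity)
          exact le_trans e4 (mul_le_mul_of_nonneg_left (e6 ▸ e5) hK0.le)
      _ = I / K₀ * ((t ^ 2 + (K₀ - t) ^ 2) / 2) := by field_simp
  -- Taylor expansion around the average point
  set L := fderiv ℝ (gradient F) xhat with hL
  set Efun : ℝ → EuclideanSpace ℝ (Fin d) :=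
    fun t => gradient F xhat - gradient F (x t) - L (xhat - x t) with hE
  have hxK := hxC.mono (hsub 0 K₀ le_rfl hK0.le)
  have hEC : ContinuousOn Efun (Set.uIcc 0 K₀) := by
    apply ContinuousOn.sub
    · exact continuousOn_const.sub (hgC.comp_continuousOn hxK)
    · exact L.continuous.comp_continuousOn (continuousOn_const.sub hxK)
  have hLint : IntervalIntegrable (fun t => xhat - x t) volume 0 K₀ := by
    apply ContinuousOn.intervalIntegrable
    exact continuousOn_const.sub hxK
  have e0 : K₀ • xhat = ∫ s in (0:ℝ)..K₀, x s := by
    rw [hxhat, smul_smul, mul_inv_cancel₀ hK0.ne', one_smul]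
  have eL : ∫ t in (0:ℝ)..K₀, L (xhat - x t) = 0 := by
    rw [L.intervalIntegral_comp_comm hLint]
    have : ∫ t in (0:ℝ)..K₀, (xhat - x t) = 0 := by
      rw [intervalIntegral.integral_sub intervalIntegrable_const (hxInt 0 K₀ le_rfl hK0.le),
        intervalIntegral.integral_const, sub_zero, e0, sub_self]
    rw [this, map_zero]
  have eE : ∫ t in (0:ℝ)..K₀, Efun t
      = K₀ • gradient F xhat - ∫ t in (0:ℝ)..K₀, gradient F (x t) := by
    have i1 : IntervalIntegrable (fun t => gradient F xhat - gradient F (x t)) volume 0 K₀ := by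
      apply ContinuousOn.intervalIntegrable
      exact continuousOn_const.sub (hgC.comp_continuousOn hxK)
    have i2 : IntervalIntegrable (fun t => L (xhat - x t)) volume 0 K₀ := by
      apply ContinuousOn.intervalIntegrable
      exact L.continuous.comp_continuousOn (continuousOn_const.sub hxK)
    rw [hE, intervalIntegral.integral_sub i1 i2, eL, sub_zero,
      intervalIntegral.integral_sub intervalIntegrable_const (hgxInt 0 K₀ le_rfl hK0.le),
      intervalIntegral.integral_const, sub_zero]
  have herr1 : ‖gradient F xhat - K₀⁻¹ • ∫ t in (0:ℝ)..K₀, gradient F (x t)‖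
      ≤ K₀⁻¹ * ∫ t in (0:ℝ)..K₀, ‖Efun t‖ := by
    have heq : gradient F xhat - K₀⁻¹ • ∫ t in (0:ℝ)..K₀, gradient F (x t)
        = K₀⁻¹ • ∫ t in (0:ℝ)..K₀, Efun t := by
      rw [eE, smul_sub, smul_smul, inv_mul_cancel₀ hK0.ne', one_smul]
    rw [heq, norm_smul, Real.norm_eq_abs, abs_of_nonneg (inv_nonneg.mpr hK0.le)]
    exact mul_le_mul_of_nonneg_left
      (intervalIntegral.norm_integral_le_integral_norm hK0.le) (by positivity)
  have herr2 : ∫ t in (0:ℝ)..K₀, ‖Efun t‖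
      ≤ ∫ t in (0:ℝ)..K₀, (ρ/2 * (I / K₀ * ((t ^ 2 + (K₀ - t) ^ 2) / 2))) := by
    apply intervalIntegral.integral_mono_on hK0.le (hEC.norm.intervalIntegrable)
    · exact (continuous_const.mul (continuous_const.mul
        (((continuous_pow 2).add
          ((continuous_const.sub continuous_id).pow 2)).div_const 2))).intervalIntegrable 0 K₀
    · intro t ht
      have h1 : Efun t = -(gradient F (x t) - gradient F xhat - L (x t - xhat)) := by
        simp only [hE, map_sub]
        abel
      have h2 : ‖Efun t‖ ≤ ρ/2 * ‖x t - xhat‖ ^ 2 := by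
        rw [h1, norm_neg]
        exact taylor_quad (gradient F) hFd2 ρ hρ.le hlipHess xhat (x t)
      calc ‖Efun t‖ ≤ ρ/2 * ‖x t - xhat‖ ^ 2 := h2
        _ = ρ/2 * ‖xhat - x t‖ ^ 2 := by rw [norm_sub_rev]
        _ ≤ ρ/2 * (I / K₀ * ((t ^ 2 + (K₀ - t) ^ 2) / 2)) :=
            mul_le_mul_of_nonneg_left (hxhat_dist t ht) (by positivity)
  have herr3 : ∫ t in (0:ℝ)..K₀, (ρ/2 * (I / K₀ * ((t ^ 2 + (K₀ - t) ^ 2) / 2)))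
      = ρ * I * K₀ ^ 2 / 6 := by
    have hfe : (fun t : ℝ => ρ/2 * (I / K₀ * ((t ^ 2 + (K₀ - t) ^ 2) / 2)))
        = fun t : ℝ => (ρ * I / (2 * K₀)) * t ^ 2 - (ρ * I / 2) * t + (ρ * I * K₀ / 4) := by
      funext t; field_simp; ring
    rw [hfe]
    have i1 : IntervalIntegrable (fun t : ℝ => (ρ * I / (2 * K₀)) * t ^ 2) volume 0 K₀ :=
      (continuous_const.mul (continuous_pow 2)).intervalIntegrable 0 K₀
    have i2 : IntervalIntegrable (fun t : ℝ => (ρ * I / 2) * t) volume 0 K₀ :=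
      (continuous_const.mul continuous_id).intervalIntegrable 0 K₀
    rw [intervalIntegral.integral_add (i1.sub i2) intervalIntegrable_const,
      intervalIntegral.integral_sub i1 i2, intervalIntegral.integral_const_mul,
      intervalIntegral.integral_const_mul, integral_pow, integral_id,
      intervalIntegral.integral_const, smul_eq_mul]
    field_simp [hK0.ne']
    ring
  -- final assembly
  have hKinv : K₀⁻¹ ≤ 2 * α := by
    have h1 : K₀⁻¹ ≤ (Tmax / 2)⁻¹ := inv_anti₀ (by linarith) hK₀lb
    have h2 : (Tmax / 2)⁻¹ = 2 * Tmax⁻¹ := by field_simp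
    have h3 : Tmax⁻¹ = α := by
      field_simp
      linarith [hαT]
    rw [h2, h3] at h1
    exact h1
  have hvKα : ‖v K₀‖ ≤ Real.sqrt 2 * (B * α) := by
    have h3 : Tmax⁻¹ = α := by field_simp; linarith [hαT]
    calc ‖v K₀‖ ≤ Real.sqrt 2 * (B / Tmax) := hvK
      _ = Real.sqrt 2 * (B * α) := by rw [div_eq_mul_inv, h3]
  have hsqrt2 : Real.sqrt 2 ≤ 17/12 := by
    nlinarith [Real.sq_sqrt (by norm_num : (0:ℝ) ≤ 2), Real.sqrt_nonneg 2]
  have hsecond : ‖K₀⁻¹ • ∫ t in (0:ℝ)..K₀, gradient F (x t)‖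
      ≤ K₀⁻¹ * (α * B + ‖v K₀‖) := by
    rw [hG, norm_smul, Real.norm_eq_abs, abs_of_nonneg (inv_nonneg.mpr hK0.le)]
    apply mul_le_mul_of_nonneg_left _ (by positivity)
    calc ‖-(α • V) - v K₀‖ ≤ ‖-(α • V)‖ + ‖v K₀‖ := norm_sub_le _ _
      _ = α * ‖V‖ + ‖v K₀‖ := by
          rw [norm_neg, norm_smul, Real.norm_eq_abs, abs_of_nonneg hα0.le]
      _ ≤ α * B + ‖v K₀‖ := by
          have := mul_le_mul_of_nonneg_left hVB hα0.le
          linarith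
  have hfirst : ‖gradient F xhat - K₀⁻¹ • ∫ t in (0:ℝ)..K₀, gradient F (x t)‖
      ≤ ε / 6 := by
    calc ‖gradient F xhat - K₀⁻¹ • ∫ t in (0:ℝ)..K₀, gradient F (x t)‖
        ≤ K₀⁻¹ * ∫ t in (0:ℝ)..K₀, ‖Efun t‖ := herr1
      _ ≤ K₀⁻¹ * (ρ * I * K₀ ^ 2 / 6) := by
          apply mul_le_mul_of_nonneg_left _ (by positivity)
          rw [← herr3]; exact herr2
      _ = ρ * (K₀ * I) / 6 := by field_simp [hK0.ne']
      _ ≤ ρ * B ^ 2 / 6 := by gcongr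
      _ = ε / 6 := by rw [hB2]; field_simp
  calc ‖gradient F xhat‖
      = ‖(gradient F xhat - K₀⁻¹ • ∫ t in (0:ℝ)..K₀, gradient F (x t))
        + K₀⁻¹ • ∫ t in (0:ℝ)..K₀, gradient F (x t)‖ := by rw [sub_add_cancel]
    _ ≤ ‖gradient F xhat - K₀⁻¹ • ∫ t in (0:ℝ)..K₀, gradient F (x t)‖
        + ‖K₀⁻¹ • ∫ t in (0:ℝ)..K₀, gradient F (x t)‖ := norm_add_le _ _
    _ ≤ ε / 6 + K₀⁻¹ * (α * B + ‖v K₀‖) := add_le_add hfirst hsecond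
    _ ≤ ε / 6 + (2 * α) * (α * B + Real.sqrt 2 * (B * α)) := by
        have h1 : 0 ≤ α * B + ‖v K₀‖ := by positivity
        have h2 : α * B + ‖v K₀‖ ≤ α * B + Real.sqrt 2 * (B * α) := by linarith [hvKα]
        have := mul_le_mul hKinv h2 h1 (by positivity)
        linarith
    _ = ε / 6 + (2 * (α ^ 2 * B) + 2 * Real.sqrt 2 * (α ^ 2 * B)) := by ring
    _ = ε / 6 + (2 * ε + 2 * Real.sqrt 2 * ε) := by rw [hα2B]
    _ ≤ 5 * ε := by nlinarith [hsqrt2, hε.le]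
end

section
/- (Bound on the number of restarts of continuous RISP.) Let F : ℝ^d → ℝ be continuously differentiable and bounded below by m ∈ ℝ, let ε, ρ > 0, and set α = (ε·ρ)^{1/4}, T_max = (ε·ρ)^{−1/4}, B = √(ε/ρ). Let K ≥ 1 be an integer and, for k = 1, …, K, let x_k : [0,∞) → ℝ^d be twice differentiable curves and 0 < T_k ≤ T_max be times such that: each x_k solves the heavy-ball ODE ẍ_{k,t} + α·ẋ_{k,t} + ∇F(x_{k,t}) = 0 for all t ≥ 0 with ẋ_{k,0} = 0; the epochs are concatenated, i.e. x_{k+1,0} = x_{k,T_k} for k = 1,…,K−1; and each restart time satisfies T_k·∫₀^{T_k} ‖ẋ_{k,t}‖² dt = B². Then K ≤ (F(x_{1,0}) − m)·√ρ·ε^{−3/2}. -/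
open intervalIntegral Real

private lemma epoch_decrease
    {d : ℕ} (F : EuclideanSpace ℝ (Fin d) → ℝ) (hF : ContDiff ℝ 1 F)
    (α : ℝ)
    (x v a : ℝ → EuclideanSpace ℝ (Fin d)) (Ti : ℝ) (hTi : 0 < Ti)
    (hx : ∀ t : ℝ, 0 ≤ t → HasDerivAt x (v t) t)
    (hv : ∀ t : ℝ, 0 ≤ t → HasDerivAt v (a t) t)
    (hode : ∀ t : ℝ, 0 ≤ t → a t + α • v t + gradient F (x t) = 0)
    (hv0 : v 0 = 0) :
    F (x Ti) + α * ∫ t in (0:ℝ)..Ti, ‖v t‖ ^ 2 ≤ F (x 0) := by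
  set E : ℝ → ℝ := fun t => F (x t) + (1/2) * inner ℝ (v t) (v t) with hE
  have hmem : ∀ t ∈ Set.uIcc (0:ℝ) Ti, 0 ≤ t := by
    intro t ht
    rw [Set.uIcc_of_le hTi.le] at ht
    exact ht.1
  have hE' : ∀ t ∈ Set.uIcc (0:ℝ) Ti,
      HasDerivAt E (-(α * ‖v t‖ ^ 2)) t := by
    intro t ht
    have ht0 : 0 ≤ t := hmem t ht
    have hdF : DifferentiableAt ℝ F (x t) :=
      (hF.differentiable one_ne_zero).differentiableAt
    have hgrad : HasGradientAt F (gradient F (x t)) (x t) :=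
      hdF.hasGradientAt
    have h1 : HasDerivAt (fun s => F (x s))
        (inner ℝ (gradient F (x t)) (v t) : ℝ) t := by
      have := hgrad.hasFDerivAt.comp_hasDerivAt t (hx t ht0)
      simp at this ⊢
      exact this
    have h2 : HasDerivAt (fun s => (1/2 : ℝ) * inner ℝ (v s) (v s))
        ((1/2 : ℝ) * ((inner ℝ (v t) (a t) : ℝ) + inner ℝ (a t) (v t))) t :=
      (HasDerivAt.inner ℝ (hv t ht0) (hv t ht0)).const_mul _
    have := h1.add h2
    refine this.congr_deriv ?_
    have hode' := hode t ht0
    have hg : gradient F (x t) = -(a t) - α • v t := by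
      have : gradient F (x t) = -(a t + α • v t) := by
        rw [eq_neg_iff_add_eq_zero]
        linear_combination (norm := module) hode'
      rw [this]; module
    rw [hg]
    simp only [inner_sub_left, inner_neg_left, real_inner_smul_left,
      real_inner_self_eq_norm_sq]
    rw [real_inner_comm (v t) (a t)]
    ring
  have hcontv : ContinuousOn v (Set.uIcc (0:ℝ) Ti) := by
    intro t ht
    exact ((hv t (hmem t ht)).continuousAt).continuousWithinAt
  have hint : IntervalIntegrable (fun t => -(α * ‖v t‖ ^ 2)) MeasureTheory.volume 0 Ti := by
    apply ContinuousOn.intervalIntegrable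
    exact (hcontv.norm.pow 2).const_smul α |>.neg
  have key := integral_eq_sub_of_hasDerivAt hE' hint
  have hI : ∫ t in (0:ℝ)..Ti, -(α * ‖v t‖ ^ 2)
      = -(α * ∫ t in (0:ℝ)..Ti, ‖v t‖ ^ 2) := by
    rw [intervalIntegral.integral_neg, intervalIntegral.integral_const_mul]
  rw [hI] at key
  have hE0 : E 0 = F (x 0) := by simp [hE, hv0]
  have hETi : F (x Ti) ≤ E Ti := by
    have : (0:ℝ) ≤ (1/2) * inner ℝ (v Ti) (v Ti) := by
      have := real_inner_self_nonneg (x := v Ti); linarith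
    simp only [hE]; linarith
  nlinarith [key, hETi, hE0]

/-- Bound on the number of restarts of continuous RISP.
The `K` epochs are indexed by `i ∈ {0, …, K-1}`; epoch `i` is the curve
`x i` with first derivative `v i` and second derivative `a i`, solving the
heavy-ball ODE with zero initial velocity, started at the endpoint of the
previous epoch, and stopped at the restart time `T i`. -/
theorem continuous_risp_restart_count_bound
    {d : ℕ} (hd : 1 ≤ d)
    (F : EuclideanSpace ℝ (Fin d) → ℝ) (hF : ContDiff ℝ 1 F)
    (m : ℝ) (hm : ∀ y, m ≤ F y)
    (ε ρ : ℝ) (hε : 0 < ε) (hρ : 0 < ρ)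
    (α Tmax B : ℝ)
    (hα : α = (ε * ρ) ^ ((1 : ℝ) / 4))
    (hTmax : Tmax = (ε * ρ) ^ (-(1 : ℝ) / 4))
    (hB : B = Real.sqrt (ε / ρ))
    (K : ℕ) (hK : 1 ≤ K)
    (x v a : ℕ → ℝ → EuclideanSpace ℝ (Fin d))
    (T : ℕ → ℝ)
    (hx : ∀ i < K, ∀ t : ℝ, 0 ≤ t → HasDerivAt (x i) (v i t) t)
    (hv : ∀ i < K, ∀ t : ℝ, 0 ≤ t → HasDerivAt (v i) (a i t) t)
    (hode : ∀ i < K, ∀ t : ℝ, 0 ≤ t →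
      a i t + α • v i t + gradient F (x i t) = 0)
    (hv0 : ∀ i < K, v i 0 = 0)
    (hT : ∀ i < K, 0 < T i ∧ T i ≤ Tmax)
    (hchain : ∀ i, i + 1 < K → x (i + 1) 0 = x i (T i))
    (hrestart : ∀ i < K, T i * ∫ t in (0 : ℝ)..(T i), ‖v i t‖ ^ 2 = B ^ 2) :
    (K : ℝ) ≤ (F (x 0 0) - m) * Real.sqrt ρ * ε ^ (-(3 : ℝ) / 2) := by
  have hερ : (0:ℝ) < ε * ρ := mul_pos hε hρ
  have hα0 : 0 < α := hα ▸ Real.rpow_pos_of_pos hερ _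
  have hTmax0 : 0 < Tmax := hTmax ▸ Real.rpow_pos_of_pos hερ _
  have hB2 : B ^ 2 = ε / ρ := by
    rw [hB, Real.sq_sqrt (div_pos hε hρ).le]
  -- per-epoch drop constant
  set c : ℝ := α * B ^ 2 / Tmax with hc
  have hc0 : 0 < c := by
    apply div_pos (mul_pos hα0 _) hTmax0
    rw [hB2]; exact div_pos hε hρ
  -- per-epoch bound
  have hepoch : ∀ i < K, F (x i (T i)) + c ≤ F (x i 0) := by
    intro i hi
    obtain ⟨hTi0, hTile⟩ := hT i hi
    have hdrop := epoch_decrease F hF α (x i) (v i) (a i) (T i) hTi0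
      (hx i hi) (hv i hi) (hode i hi) (hv0 i hi)
    have hIv : ∫ t in (0:ℝ)..(T i), ‖v i t‖ ^ 2 = B ^ 2 / T i := by
      field_simp [hTi0.ne'] at hrestart ⊢
      linarith [hrestart i hi]
    have hle : c ≤ α * ∫ t in (0:ℝ)..(T i), ‖v i t‖ ^ 2 := by
      rw [hIv, hc]
      have hB2pos : 0 < B ^ 2 := by rw [hB2]; exact div_pos hε hρ
      have : B ^ 2 / Tmax ≤ B ^ 2 / T i :=
        div_le_div_of_nonneg_left hB2pos.le hTi0 hTile
      calc α * B ^ 2 / Tmax = α * (B ^ 2 / Tmax) := by ring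
        _ ≤ α * (B ^ 2 / T i) := by nlinarith
    linarith
  -- induction: F (x i 0) ≤ F (x 0 0) - i * c for i < K
  have hind : ∀ i < K, F (x i 0) ≤ F (x 0 0) - i * c := by
    intro i
    induction i with
    | zero => intro _; simp
    | succ n ih =>
      intro hn
      have hnK : n < K := Nat.lt_of_succ_lt hn
      have h1 := hepoch n hnK
      have h2 := hchain n hn
      have h3 := ih hnK
      rw [h2]
      push_cast
      linarith
  -- final epoch
  have hKm1 : K - 1 < K := Nat.sub_lt hK Nat.one_pos
  have hfin : m ≤ F (x 0 0) - K * c := by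
    have h1 := hepoch (K - 1) hKm1
    have h2 := hind (K - 1) hKm1
    have h3 := hm (x (K - 1) (T (K - 1)))
    have hcast : ((K - 1 : ℕ) : ℝ) = (K : ℝ) - 1 := by
      have : (1:ℕ) ≤ K := hK
      push_cast [this]; ring
    rw [hcast] at h2
    nlinarith
  -- arithmetic
  have hsε : 0 < Real.sqrt ε := Real.sqrt_pos.2 hε
  have hsρ : 0 < Real.sqrt ρ := Real.sqrt_pos.2 hρ
  have hεsq : Real.sqrt ε * Real.sqrt ε = ε := Real.mul_self_sqrt hε.le
  have hρsq : Real.sqrt ρ * Real.sqrt ρ = ρ := Real.mul_self_sqrt hρ.le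
  have hq : α / Tmax = Real.sqrt (ε * ρ) := by
    rw [hα, hTmax, ← Real.rpow_sub hερ, Real.sqrt_eq_rpow]
    norm_num
  have hcval : c = ε * Real.sqrt ε / Real.sqrt ρ := by
    rw [hc, hB2]
    have : α * (ε / ρ) / Tmax = (α / Tmax) * (ε / ρ) := by ring
    rw [show α * (ε/ρ) = (ε/ρ) * α by ring, mul_div_assoc, hq,
      Real.sqrt_mul hε.le]
    field_simp
    linear_combination hρsq
  have hεpow : ε ^ (-(3:ℝ)/2) = 1 / (ε * Real.sqrt ε) := by
    rw [show (-(3:ℝ)/2) = -(3/2 : ℝ) by norm_num, Real.rpow_neg hε.le,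
      show (3:ℝ)/2 = 1 + 1/2 by norm_num, Real.rpow_add hε, Real.rpow_one,
      ← Real.sqrt_eq_rpow, one_div]
  rw [hcval] at hfin
  have h1 : (K:ℝ) * (ε * Real.sqrt ε / Real.sqrt ρ) ≤ F (x 0 0) - m := by
    linarith
  have h2 : (K:ℝ) * (ε * Real.sqrt ε) ≤ (F (x 0 0) - m) * Real.sqrt ρ := by
    have := mul_le_mul_of_nonneg_right h1 hsρ.le
    rw [mul_assoc, div_mul_cancel₀ _ hsρ.ne'] at this
    exact this
  rw [hεpow, mul_one_div, le_div_iff₀ (mul_pos hε hsε)]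
  linarith
end
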